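/- arXiv:2111.04311 — 4 statements merged into one kernel-verified Lean document; each statement's English description precedes it below -/
import Mathlib

section
/- Let Z be a nonnegative real random variable independent of an n-dimensional standard Gaussian vector N_n, A an invertible n×n real matrix, γ ∈ ℝⁿ with γ0 = A⁻¹γ ≠ 0, and X = γZ + √Z·A N_n. Let ρ be a law-invariant positively homogeneous risk functional on real random variables (ρ(λW) = λρ(W) for λ > 0 and ρ(W) = ρ(W') whenever W and W' are equal in distribution). Then for every ω ∈ ℝⁿ with x = Aᵀω ≠ 0, ρ(ωᵀX) = ‖x‖ · ρ( ‖γ0‖·cos[θ(γ0,x)]·Z + √Z·N ), where N is a scalar standard normal random variable independent of Z and cos[θ(γ0,x)] = ⟨x,γ0⟩/(‖x‖·‖γ0‖). -/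
open MeasureTheory ProbabilityTheory Real
open scoped NNReal ENNReal Matrix

namespace Statement1Aux

lemma pdf_mul_eq {a b : ℝ≥0} (ha : a ≠ 0) (hb : b ≠ 0) (y x : ℝ) :
    gaussianPDFReal 0 a x * gaussianPDFReal 0 b (y - x)
      = ((√(2 * π * (a : ℝ)))⁻¹ * (√(2 * π * (b : ℝ)))⁻¹
          * rexp (-y ^ 2 / (2 * ((a : ℝ) + (b : ℝ)))))
        * rexp (-(((a : ℝ) + (b : ℝ)) / (2 * (a : ℝ) * (b : ℝ)))
            * (x - (a : ℝ) * y / ((a : ℝ) + (b : ℝ))) ^ 2) := by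
  have hA : (0 : ℝ) < a := NNReal.coe_pos.mpr (pos_iff_ne_zero.mpr ha)
  have hB : (0 : ℝ) < b := NNReal.coe_pos.mpr (pos_iff_ne_zero.mpr hb)
  have hAB : (0 : ℝ) < (a : ℝ) + b := by linarith
  have hexp : -(x - 0) ^ 2 / (2 * (a : ℝ)) + -(y - x - 0) ^ 2 / (2 * (b : ℝ))
      = -y ^ 2 / (2 * ((a : ℝ) + b))
        + -(((a : ℝ) + b) / (2 * (a : ℝ) * b)) * (x - (a : ℝ) * y / ((a : ℝ) + b)) ^ 2 := by
    field_simp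
    ring
  rw [gaussianPDFReal, gaussianPDFReal, mul_mul_mul_comm, ← Real.exp_add, hexp, Real.exp_add]
  ring

lemma integrable_pdf_mul {a b : ℝ≥0} (ha : a ≠ 0) (hb : b ≠ 0) (y : ℝ) :
    Integrable (fun x => gaussianPDFReal 0 a x * gaussianPDFReal 0 b (y - x)) := by
  have hA : (0 : ℝ) < a := NNReal.coe_pos.mpr (pos_iff_ne_zero.mpr ha)
  have hB : (0 : ℝ) < b := NNReal.coe_pos.mpr (pos_iff_ne_zero.mpr hb)
  have hk : (0 : ℝ) < ((a : ℝ) + b) / (2 * (a : ℝ) * b) := by positivity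
  have heq : (fun x => gaussianPDFReal 0 a x * gaussianPDFReal 0 b (y - x))
      = fun x => ((√(2 * π * (a : ℝ)))⁻¹ * (√(2 * π * (b : ℝ)))⁻¹
          * rexp (-y ^ 2 / (2 * ((a : ℝ) + (b : ℝ)))))
        * rexp (-(((a : ℝ) + (b : ℝ)) / (2 * (a : ℝ) * (b : ℝ)))
            * (x - (a : ℝ) * y / ((a : ℝ) + (b : ℝ))) ^ 2) :=
    funext (pdf_mul_eq ha hb y)
  rw [heq]
  exact ((integrable_exp_neg_mul_sq hk).comp_sub_right _).const_mul _

lemma conv_pdfReal {a b : ℝ≥0} (ha : a ≠ 0) (hb : b ≠ 0) (y : ℝ) :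
    ∫ x, gaussianPDFReal 0 a x * gaussianPDFReal 0 b (y - x)
      = gaussianPDFReal 0 (a + b) y := by
  have hA : (0 : ℝ) < a := NNReal.coe_pos.mpr (pos_iff_ne_zero.mpr ha)
  have hB : (0 : ℝ) < b := NNReal.coe_pos.mpr (pos_iff_ne_zero.mpr hb)
  have hAB : (0 : ℝ) < (a : ℝ) + b := by linarith
  have hcoef : (√(2 * π * (a : ℝ)))⁻¹ * (√(2 * π * (b : ℝ)))⁻¹
      * √(π / (((a : ℝ) + b) / (2 * (a : ℝ) * b))) = (√(2 * π * ((a : ℝ) + b)))⁻¹ := by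
    rw [← Real.sqrt_inv, ← Real.sqrt_inv, ← Real.sqrt_mul (by positivity),
      ← Real.sqrt_mul (by positivity), ← Real.sqrt_inv]
    congr 1
    have hπ := Real.pi_pos
    field_simp
  simp_rw [pdf_mul_eq ha hb y]
  rw [integral_const_mul,
    integral_sub_right_eq_self
      (fun u => rexp (-(((a : ℝ) + (b : ℝ)) / (2 * (a : ℝ) * (b : ℝ))) * u ^ 2))
      ((a : ℝ) * y / ((a : ℝ) + (b : ℝ))),
    integral_gaussian, gaussianPDFReal]
  push_cast
  rw [sub_zero, ← hcoef]
  ring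

lemma gaussian_conv (a b : ℝ≥0) :
    ((gaussianReal 0 a).prod (gaussianReal 0 b)).map (fun p : ℝ × ℝ => p.1 + p.2)
      = gaussianReal 0 (a + b) := by
  by_cases ha : a = 0
  · subst ha
    rw [zero_add, gaussianReal_zero_var, Measure.dirac_prod,
      Measure.map_map measurable_add measurable_prodMk_left]
    have : ((fun p : ℝ × ℝ => p.1 + p.2) ∘ Prod.mk (0 : ℝ)) = id := by
      funext z; simp
    rw [this, Measure.map_id]
  by_cases hb : b = 0
  · subst hb
    rw [add_zero, gaussianReal_zero_var, Measure.prod_dirac,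
      Measure.map_map measurable_add
        (show Measurable fun x : ℝ => (x, (0 : ℝ)) from measurable_id.prodMk measurable_const)]
    have : ((fun p : ℝ × ℝ => p.1 + p.2) ∘ fun x : ℝ => (x, (0 : ℝ))) = id := by
      funext z; simp
    rw [this, Measure.map_id]
  have hab : a + b ≠ 0 := by
    simp [ha, hb]
  refine Measure.ext fun s hs => ?_
  rw [Measure.map_apply measurable_add hs, Measure.prod_apply (measurable_add hs)]
  have h1 : ∀ x : ℝ, gaussianReal 0 b (Prod.mk x ⁻¹' ((fun p : ℝ × ℝ => p.1 + p.2) ⁻¹' s))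
      = ∫⁻ y in s, gaussianPDF x b y := by
    intro x
    have hset : (Prod.mk x ⁻¹' ((fun p : ℝ × ℝ => p.1 + p.2) ⁻¹' s)) = (x + ·) ⁻¹' s := rfl
    rw [hset, ← Measure.map_apply (measurable_const_add x) hs,
      gaussianReal_map_const_add x, zero_add, gaussianReal_apply _ hb s]
  simp_rw [h1]
  rw [gaussianReal_of_var_ne_zero 0 ha,
    lintegral_withDensity_eq_lintegral_mul_non_measurable _ (measurable_gaussianPDF 0 a)
      (ae_of_all _ fun x => by rw [gaussianPDF]; exact ENNReal.ofReal_lt_top)]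
  simp only [Pi.mul_apply]
  have hpull : ∀ x : ℝ, gaussianPDF 0 a x * ∫⁻ y in s, gaussianPDF x b y
      = ∫⁻ y in s, gaussianPDF 0 a x * gaussianPDF x b y := by
    intro x
    rw [lintegral_const_mul' _ _ (by rw [gaussianPDF]; exact ENNReal.ofReal_ne_top)]
  simp_rw [hpull]
  have hswap := lintegral_lintegral_swap (μ := (volume : Measure ℝ))
    (ν := (volume : Measure ℝ).restrict s)
    (f := fun x y => gaussianPDF 0 a x * gaussianPDF x b y) ?_
  · rw [hswap]
    have hinner : ∀ y : ℝ, ∫⁻ x, gaussianPDF 0 a x * gaussianPDF x b y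
        = gaussianPDF 0 (a + b) y := by
      intro y
      have h2 : ∀ x : ℝ, gaussianPDF 0 a x * gaussianPDF x b y
          = ENNReal.ofReal (gaussianPDFReal 0 a x * gaussianPDFReal 0 b (y - x)) := by
        intro x
        rw [gaussianPDF, gaussianPDF,
          ← ENNReal.ofReal_mul (gaussianPDFReal_nonneg _ _ _)]
        congr 1
        rw [gaussianPDFReal_sub, zero_add]
      simp_rw [h2]
      rw [← ofReal_integral_eq_lintegral_ofReal (integrable_pdf_mul ha hb y)
          (ae_of_all _ fun x =>
            mul_nonneg (gaussianPDFReal_nonneg _ _ _) (gaussianPDFReal_nonneg _ _ _)),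
        conv_pdfReal ha hb y, gaussianPDF]
    simp_rw [hinner]
    rw [gaussianReal_apply _ hab s]
  · apply Measurable.aemeasurable
    have m1 : Measurable fun p : ℝ × ℝ => gaussianPDF 0 a p.1 :=
      (measurable_gaussianPDF 0 a).comp measurable_fst
    have m2 : Measurable fun p : ℝ × ℝ => gaussianPDF p.1 b p.2 := by
      simp only [gaussianPDF, gaussianPDFReal]
      exact ((((measurable_snd.sub measurable_fst).pow_const 2).neg.div_const
        _).exp.const_mul _).ennreal_ofReal
    exact m1.mul m2

lemma indep_gaussian_add {Ω : Type*} [MeasurableSpace Ω] {P : Measure Ω}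
    [IsProbabilityMeasure P] {X Y : Ω → ℝ}
    (hX : Measurable X) (hY : Measurable Y) (h : IndepFun X Y P) {a b : ℝ≥0}
    (ha : P.map X = gaussianReal 0 a) (hb : P.map Y = gaussianReal 0 b) :
    P.map (fun ω => X ω + Y ω) = gaussianReal 0 (a + b) := by
  have hjoint : P.map (fun ω => (X ω, Y ω)) = (P.map X).prod (P.map Y) :=
    (indepFun_iff_map_prod_eq_prod_map_map hX.aemeasurable hY.aemeasurable).mp h
  calc P.map (fun ω => X ω + Y ω)
      = (P.map (fun ω => (X ω, Y ω))).map (fun p : ℝ × ℝ => p.1 + p.2) := by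
        rw [Measure.map_map measurable_add (hX.prodMk hY)]; rfl
    _ = ((gaussianReal 0 a).prod (gaussianReal 0 b)).map (fun p : ℝ × ℝ => p.1 + p.2) := by
        rw [hjoint, ha, hb]
    _ = gaussianReal 0 (a + b) := gaussian_conv a b

lemma sum_gaussian {Ω : Type*} [MeasurableSpace Ω] (P : Measure Ω) [IsProbabilityMeasure P]
    {n : ℕ} (Nn : Ω → Fin n → ℝ) (hNnmeas : Measurable Nn)
    (hNniid : iIndepFun (fun i ω => Nn ω i) P)
    (hNngauss : ∀ i, Measure.map (fun ω => Nn ω i) P = gaussianReal 0 1)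
    (c : Fin n → ℝ) (s : Finset (Fin n)) :
    P.map (fun ω => ∑ i ∈ s, c i * Nn ω i)
      = gaussianReal 0 (∑ i ∈ s, (NNReal.mk (c i ^ 2) (sq_nonneg _) : ℝ≥0)) := by
  classical
  set f : Fin n → Ω → ℝ := fun j ω => c j * Nn ω j with hf
  have hf_meas : ∀ j, Measurable (f j) := fun j =>
    (measurable_pi_apply j).comp hNnmeas |>.const_mul (c j)
  have hf_indep : iIndepFun f P := by
    have := hNniid.comp (g := fun j : Fin n => fun u : ℝ => c j * u)
      (fun j => measurable_const_mul (c j))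
    exact this
  have hf_law : ∀ j, P.map (f j) = gaussianReal 0 (NNReal.mk (c j ^ 2) (sq_nonneg _)) := by
    intro j
    have h1 : ((P.map (fun ω => Nn ω j)).map (fun u : ℝ => c j * u)) = P.map (f j) :=
      Measure.map_map (measurable_const_mul (c j))
        (show Measurable fun ω => Nn ω j from (measurable_pi_apply j).comp hNnmeas)
    rw [← h1, hNngauss j, gaussianReal_map_const_mul, mul_zero, mul_one]
  induction s using Finset.induction_on with
  | empty =>
      simp only [Finset.sum_empty]
      rw [show (fun _ : Ω => (0 : ℝ)) = fun _ => (0 : ℝ) from rfl, Measure.map_const,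
        measure_univ, one_smul, gaussianReal_zero_var]
  | insert i t hi ih =>
      have hsum_meas : Measurable (fun ω => ∑ j ∈ t, c j * Nn ω j) :=
        Finset.measurable_sum t fun j _ => hf_meas j
      have hindep : IndepFun (∑ j ∈ t, f j) (f i) P :=
        hf_indep.indepFun_finset_sum_of_notMem hf_meas hi
      have hsum_eq : (∑ j ∈ t, f j) = fun ω => ∑ j ∈ t, c j * Nn ω j := by
        funext ω
        simp [Finset.sum_apply, hf]
      have hadd := indep_gaussian_add hsum_meas (hf_meas i)
        (by rwa [hsum_eq] at hindep) (by rw [← hsum_eq]; exact hsum_eq ▸ ih) (hf_law i)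
      have hfun : (fun ω => ∑ j ∈ insert i t, c j * Nn ω j)
          = fun ω => (∑ j ∈ t, c j * Nn ω j) + f i ω := by
        funext ω
        rw [Finset.sum_insert hi]
        simp [hf]
        ring
      rw [hfun, hadd, Finset.sum_insert hi, add_comm]

end Statement1Aux

open Statement1Aux

/-- For a law-invariant positively homogeneous risk functional `ρ` and
`X = γ Z + √Z · A Nn` with `γ0 = A⁻¹ γ ≠ 0`, for every portfolio `w` with `x = Aᵀ w ≠ 0`,
`ρ(wᵀX) = ‖x‖ · ρ(‖γ0‖ cos[θ(γ0,x)] Z + √Z N)` where `N` is a scalar standard normal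
independent of `Z` and `cos[θ(γ0,x)] = ⟨x,γ0⟩ / (‖x‖ ‖γ0‖)`. -/
theorem statement1 {Ω : Type*} [MeasurableSpace Ω] (P : Measure Ω) [IsProbabilityMeasure P]
    {n : ℕ} (Z : Ω → ℝ) (Nn : Ω → Fin n → ℝ) (N : Ω → ℝ)
    (hZmeas : Measurable Z) (hZnonneg : ∀ ω, 0 ≤ Z ω)
    (hNnmeas : Measurable Nn)
    (hNniid : iIndepFun (fun i ω => Nn ω i) P)
    (hNngauss : ∀ i, Measure.map (fun ω => Nn ω i) P = gaussianReal 0 1)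
    (hindepZNn : IndepFun Z Nn P)
    (hNmeas : Measurable N)
    (hNgauss : Measure.map N P = gaussianReal 0 1)
    (hindepZN : IndepFun Z N P)
    (A : Matrix (Fin n) (Fin n) ℝ) (hA : IsUnit A.det)
    (γ γ0 : Fin n → ℝ) (hγ0 : γ0 = A⁻¹.mulVec γ) (hγ0ne : γ0 ≠ 0)
    (X : Ω → Fin n → ℝ)
    (hX : ∀ ω i, X ω i = γ i * Z ω + Real.sqrt (Z ω) * A.mulVec (Nn ω) i)
    (ρ : (Ω → ℝ) → ℝ)
    (hρ_law : ∀ W W' : Ω → ℝ, Measure.map W P = Measure.map W' P → ρ W = ρ W')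
    (hρ_hom : ∀ (W : Ω → ℝ) (c : ℝ), 0 < c → ρ (fun ω => c * W ω) = c * ρ W)
    (w x : Fin n → ℝ) (hx : x = A.transpose.mulVec w) (hxne : x ≠ 0) :
    ρ (fun ω => ∑ i, w i * X ω i)
      = Real.sqrt (∑ i, x i ^ 2) *
        ρ (fun ω =>
            Real.sqrt (∑ i, γ0 i ^ 2) *
              ((∑ i, x i * γ0 i) /
                (Real.sqrt (∑ i, x i ^ 2) * Real.sqrt (∑ i, γ0 i ^ 2))) * Z ω
            + Real.sqrt (Z ω) * N ω) := by
  classical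
  -- notation
  set c0 : ℝ := ∑ i, x i * γ0 i with hc0
  have hsumx : 0 < ∑ i, x i ^ 2 := by
    obtain ⟨i, hi⟩ := Function.ne_iff.mp hxne
    refine Finset.sum_pos' (fun j _ => sq_nonneg _) ⟨i, Finset.mem_univ _, ?_⟩
    exact (sq_nonneg _).lt_of_ne' (pow_ne_zero 2 hi)
  have hsumγ : 0 < ∑ i, γ0 i ^ 2 := by
    obtain ⟨i, hi⟩ := Function.ne_iff.mp hγ0ne
    refine Finset.sum_pos' (fun j _ => sq_nonneg _) ⟨i, Finset.mem_univ _, ?_⟩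
    exact (sq_nonneg _).lt_of_ne' (pow_ne_zero 2 hi)
  set sx : ℝ := Real.sqrt (∑ i, x i ^ 2) with hsx
  set sγ : ℝ := Real.sqrt (∑ i, γ0 i ^ 2) with hsγ
  have hsxpos : 0 < sx := Real.sqrt_pos.mpr hsumx
  have hsγpos : 0 < sγ := Real.sqrt_pos.mpr hsumγ
  -- γ = A γ0
  have hγ : γ = A.mulVec γ0 := by
    rw [hγ0, Matrix.mulVec_mulVec, Matrix.mul_nonsing_inv _ hA, Matrix.one_mulVec]
  -- x as vecMul
  have hxv : x = w ᵥ* A := by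
    rw [hx, Matrix.mulVec_transpose]
  -- dot product identities
  have hdot1 : ∀ v : Fin n → ℝ, ∑ i, w i * A.mulVec v i = ∑ i, x i * v i := by
    intro v
    have : w ⬝ᵥ A *ᵥ v = (w ᵥ* A) ⬝ᵥ v := Matrix.dotProduct_mulVec w A v
    rw [hxv]
    exact this
  have hdot2 : ∑ i, w i * γ i = c0 := by
    rw [hγ, hc0]
    exact hdot1 γ0
  -- rewrite the portfolio payoff
  have key : (fun ω => ∑ i, w i * X ω i)
      = fun ω => c0 * Z ω + Real.sqrt (Z ω) * ∑ i, x i * Nn ω i := by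
    funext ω
    have hterm : ∀ i, w i * X ω i
        = (w i * γ i) * Z ω + Real.sqrt (Z ω) * (w i * A.mulVec (Nn ω) i) := by
      intro i
      rw [hX]
      ring
    rw [Finset.sum_congr rfl fun i _ => hterm i, Finset.sum_add_distrib,
      ← Finset.sum_mul, ← Finset.mul_sum, hdot2, hdot1]
  -- the weighted Gaussian sums
  set S1 : Ω → ℝ := fun ω => ∑ i, x i * Nn ω i with hS1
  set S2 : Ω → ℝ := fun ω => sx * N ω with hS2
  have hS1meas : Measurable S1 :=
    Finset.measurable_sum Finset.univ fun i _ =>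
      ((measurable_pi_apply i).comp hNnmeas).const_mul (x i)
  have hS2meas : Measurable S2 := hNmeas.const_mul sx
  set V : ℝ≥0 := ∑ i, (NNReal.mk (x i ^ 2) (sq_nonneg _) : ℝ≥0) with hV
  have hS1law : P.map S1 = gaussianReal 0 V :=
    sum_gaussian P Nn hNnmeas hNniid hNngauss x Finset.univ
  have hS2law : P.map S2 = gaussianReal 0 V := by
    have h1 : P.map S2 = (P.map N).map (fun u : ℝ => sx * u) := by
      rw [Measure.map_map (measurable_const_mul sx) hNmeas]
      rfl
    rw [h1, hNgauss, gaussianReal_map_const_mul, mul_zero]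
    congr 1
    refine NNReal.coe_injective ?_
    simp only [NNReal.coe_mul, NNReal.coe_one, mul_one, NNReal.coe_mk, hV, NNReal.coe_sum]
    rw [hsx, Real.sq_sqrt hsumx.le]
  -- independence of Z and the Gaussian parts
  have hZS1 : IndepFun Z S1 P := by
    have := hindepZNn.comp measurable_id
      (Finset.measurable_sum Finset.univ fun i (_ : i ∈ Finset.univ) =>
        (by fun_prop : Measurable fun v : Fin n → ℝ => x i * v i) :
        Measurable fun v : Fin n → ℝ => ∑ i, x i * v i)
    exact this
  have hZS2 : IndepFun Z S2 P := by
    have := hindepZN.comp measurable_id (measurable_const_mul sx)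
    exact this
  -- equality of joint laws, hence of the laws of the two payoffs
  have hjoint1 : P.map (fun ω => (Z ω, S1 ω)) = (P.map Z).prod (gaussianReal 0 V) := by
    rw [(indepFun_iff_map_prod_eq_prod_map_map hZmeas.aemeasurable
      hS1meas.aemeasurable).mp hZS1, hS1law]
  have hjoint2 : P.map (fun ω => (Z ω, S2 ω)) = (P.map Z).prod (gaussianReal 0 V) := by
    rw [(indepFun_iff_map_prod_eq_prod_map_map hZmeas.aemeasurable
      hS2meas.aemeasurable).mp hZS2, hS2law]
  set F : ℝ × ℝ → ℝ := fun p => c0 * p.1 + Real.sqrt p.1 * p.2 with hF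
  have hFmeas : Measurable F :=
    (measurable_fst.const_mul c0).add
      ((Real.continuous_sqrt.measurable.comp measurable_fst).mul measurable_snd)
  have hlaw_eq : P.map (fun ω => c0 * Z ω + Real.sqrt (Z ω) * S1 ω)
      = P.map (fun ω => c0 * Z ω + Real.sqrt (Z ω) * S2 ω) := by
    have e1 : P.map (fun ω => c0 * Z ω + Real.sqrt (Z ω) * S1 ω)
        = (P.map (fun ω => (Z ω, S1 ω))).map F := by
      rw [Measure.map_map hFmeas (hZmeas.prodMk hS1meas)]
      rfl
    have e2 : P.map (fun ω => c0 * Z ω + Real.sqrt (Z ω) * S2 ω)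
        = (P.map (fun ω => (Z ω, S2 ω))).map F := by
      rw [Measure.map_map hFmeas (hZmeas.prodMk hS2meas)]
      rfl
    rw [e1, e2, hjoint1, hjoint2]
  -- put everything together
  rw [key]
  have hρ1 : ρ (fun ω => c0 * Z ω + Real.sqrt (Z ω) * S1 ω)
      = ρ (fun ω => c0 * Z ω + Real.sqrt (Z ω) * S2 ω) :=
    hρ_law _ _ hlaw_eq
  have hcoef : sγ * (c0 / (sx * sγ)) = c0 / sx := by
    field_simp
  have hhom := hρ_hom (fun ω => sγ * (c0 / (sx * sγ)) * Z ω + Real.sqrt (Z ω) * N ω) sx hsxpos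
  have hfun2 : (fun ω => sx * (sγ * (c0 / (sx * sγ)) * Z ω + Real.sqrt (Z ω) * N ω))
      = fun ω => c0 * Z ω + Real.sqrt (Z ω) * S2 ω := by
    funext ω
    rw [hcoef, hS2]
    field_simp
  rw [← hfun2] at hρ1
  rw [hρ1, hhom]
end

section
/- Let Z be a nonnegative real random variable with finite third moment, independent of an n-dimensional standard Gaussian vector N_n, let γ0 ∈ ℝⁿ, γ0 ≠ 0, and Y = γ0·Z + √Z·N_n. Then for every x ∈ ℝⁿ, x ≠ 0, the third central moment of ⟨x,Y⟩ equals ‖x‖³·( ‖γ0‖³φ³·m₃(Z) + 3‖γ0‖φ·Var(Z) ), where φ = ⟨x,γ0⟩/(‖x‖·‖γ0‖) and m₃(Z) = E[(Z − E Z)³]. Consequently, if Var(⟨x,Y⟩) > 0, the skewness of ⟨x,Y⟩ equals ( ‖γ0‖³φ³ m₃(Z) + 3‖γ0‖φ Var(Z) ) / ( ‖γ0‖²φ² Var(Z) + E[Z] )^{3/2}. -/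
open MeasureTheory ProbabilityTheory Real Filter Set Topology
open scoped NNReal ENNReal

noncomputable def stdE (x : ℝ) : ℝ := Real.exp (-(1/2) * x ^ 2)

lemma integrable_pow_gauss (k : ℕ) : Integrable (fun x : ℝ => x ^ k * stdE x) := by
  have h := integrable_rpow_mul_exp_neg_mul_sq (b := (1/2 : ℝ)) (by norm_num)
    (s := (k : ℝ)) (lt_of_lt_of_le (by norm_num) (Nat.cast_nonneg k))
  simpa [stdE, Real.rpow_natCast] using h

lemma hasDeriv_gauss (x : ℝ) :
    HasDerivAt (fun y : ℝ => -y * stdE y) (x ^ 2 * stdE x - stdE x) x := by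
  have h1 : HasDerivAt (fun y : ℝ => -(1/2) * y ^ 2) (-x) x := by
    have := (hasDerivAt_pow 2 x).const_mul (-(1/2) : ℝ)
    exact this.congr_deriv (by norm_num; ring)
  have h2 : HasDerivAt (fun y : ℝ => stdE y) (stdE x * (-x)) x := h1.exp
  have h3 : HasDerivAt (fun y : ℝ => -y) (-1) x := (hasDerivAt_id x).neg
  have := h3.mul h2
  exact this.congr_deriv (by ring)

lemma tendsto_gauss_top : Tendsto (fun x : ℝ => -x * stdE x) atTop (𝓝 0) := by
  have h := rpow_mul_exp_neg_mul_sq_isLittleO_exp_neg (by norm_num : (0:ℝ) < 1/2) 1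
  have h0 : Tendsto (fun x : ℝ => x * stdE x) atTop (𝓝 0) := by
    have hhalf : Tendsto (fun x : ℝ => (1/2) * x) atTop atTop :=
      tendsto_id.const_mul_atTop (by norm_num)
    have hrhs : Tendsto (fun x : ℝ => Real.exp (-(1/2) * x)) atTop (𝓝 0) := by
      refine (Real.tendsto_exp_neg_atTop_nhds_zero.comp hhalf).congr fun x => ?_
      simp [Function.comp, neg_mul]
    have := h.trans_tendsto hrhs
    simpa [Real.rpow_one, stdE] using this
  simpa using h0.neg

lemma tendsto_gauss_bot : Tendsto (fun x : ℝ => -x * stdE x) atBot (𝓝 0) := by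
  have h0 : Tendsto (fun x : ℝ => x * stdE x) atTop (𝓝 0) := by
    simpa using tendsto_gauss_top.neg
  have := h0.comp tendsto_neg_atBot_atTop
  refine this.congr fun x => ?_
  simp [stdE, Function.comp]

lemma integral_sq_gauss : ∫ x : ℝ, x ^ 2 * stdE x = ∫ x : ℝ, stdE x := by
  have hi2 : Integrable (fun x : ℝ => x ^ 2 * stdE x) := integrable_pow_gauss 2
  have hi0 : Integrable stdE := by simpa using integrable_pow_gauss 0
  have hint : Integrable (fun x : ℝ => x ^ 2 * stdE x - stdE x) := hi2.sub hi0
  have hIoi : ∫ x in Ioi (0:ℝ), (x ^ 2 * stdE x - stdE x) = 0 - (-(0:ℝ) * stdE 0) :=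
    integral_Ioi_of_hasDerivAt_of_tendsto' (fun x _ => hasDeriv_gauss x)
      hint.integrableOn tendsto_gauss_top
  have hIic : ∫ x in Iic (0:ℝ), (x ^ 2 * stdE x - stdE x) = (-(0:ℝ) * stdE 0) - 0 :=
    integral_Iic_of_hasDerivAt_of_tendsto' (fun x _ => hasDeriv_gauss x)
      hint.integrableOn tendsto_gauss_bot
  have hall : ∫ x : ℝ, (x ^ 2 * stdE x - stdE x) = 0 := by
    rw [← intervalIntegral.integral_Iic_add_Ioi hint.integrableOn hint.integrableOn, hIoi, hIic]
    ring
  have := integral_sub hi2 hi0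
  rw [hall] at this
  linarith [this]


noncomputable def gc : ℝ := (Real.sqrt (2 * Real.pi))⁻¹

lemma gc_nonneg : 0 ≤ gc := inv_nonneg.2 (Real.sqrt_nonneg _)

lemma stdE_nonneg (x : ℝ) : 0 ≤ stdE x := (Real.exp_pos _).le

lemma stdE_cont : Continuous stdE := by
  unfold stdE; continuity

lemma gaussianReal_eq_density :
    gaussianReal 0 1 = volume.withDensity fun x => ENNReal.ofReal (gc * stdE x) := by
  rw [gaussianReal_of_var_ne_zero 0 one_ne_zero]
  congr 1
  funext x
  rw [gaussianPDF_def, gaussianPDFReal_def]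
  congr 1
  simp [gc, stdE]
  ring_nf

lemma integrable_pow_gaussianReal (k : ℕ) :
    Integrable (fun x : ℝ => x ^ k) (gaussianReal 0 1) := by
  rw [gaussianReal_eq_density, integrable_withDensity_iff]
  · have h : Integrable (fun x : ℝ => gc * (x ^ k * stdE x)) volume :=
      (integrable_pow_gauss k).const_mul gc
    refine h.congr (Eventually.of_forall fun x => ?_)
    show gc * (x ^ k * stdE x) = x ^ k * (ENNReal.ofReal (gc * stdE x)).toReal
    rw [ENNReal.toReal_ofReal (mul_nonneg gc_nonneg (stdE_nonneg x))]
    ring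
  · exact (measurable_const.mul stdE_cont.measurable).ennreal_ofReal
  · exact Eventually.of_forall fun x => ENNReal.ofReal_lt_top

lemma integral_gaussianReal_eq (g : ℝ → ℝ) :
    ∫ x, g x ∂(gaussianReal 0 1) = ∫ x, (gc * stdE x) * g x := by
  rw [gaussianReal_eq_density]
  have hf : Measurable (fun x : ℝ => Real.toNNReal (gc * stdE x)) :=
    (measurable_const.mul stdE_cont.measurable).real_toNNReal
  have heq : (fun x : ℝ => ENNReal.ofReal (gc * stdE x))
      = fun x : ℝ => (((gc * stdE x).toNNReal : ℝ≥0) : ℝ≥0∞) := rfl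
  rw [heq, integral_withDensity_eq_integral_smul hf]
  refine integral_congr_ae (Eventually.of_forall fun x => ?_)
  simp [NNReal.smul_def, Real.coe_toNNReal _ (mul_nonneg gc_nonneg (stdE_nonneg x))]


lemma integral_sq_gaussianReal : ∫ x : ℝ, x ^ 2 ∂(gaussianReal 0 1) = 1 := by
  have h1 : (1 : ℝ) = ∫ x : ℝ, (1 : ℝ) ∂(gaussianReal 0 1) := by simp
  rw [integral_gaussianReal_eq]
  conv_rhs => rw [h1, integral_gaussianReal_eq]
  have h2 : ∀ x : ℝ, gc * stdE x * x ^ 2 = gc * (x ^ 2 * stdE x) := fun x => by ring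
  simp only [h2, mul_one]
  rw [integral_const_mul, integral_const_mul, integral_sq_gauss]

lemma integral_odd_gaussianReal (k : ℕ) (hk : Odd k) :
    ∫ x : ℝ, x ^ k ∂(gaussianReal 0 1) = 0 := by
  have hmap : Measure.map (fun x : ℝ => (-1 : ℝ) * x) (gaussianReal 0 1) = gaussianReal 0 1 := by
    have hv : (⟨(-1:ℝ)^2, sq_nonneg _⟩ : NNReal) * 1 = 1 := by
      ext
      norm_num
    rw [gaussianReal_map_const_mul (-1 : ℝ)]
    norm_num [hv]
  have h : ∫ x : ℝ, x ^ k ∂(gaussianReal 0 1)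
      = ∫ x : ℝ, ((-1 : ℝ) * x) ^ k ∂(gaussianReal 0 1) := by
    conv_lhs => rw [← hmap]
    rw [integral_map (measurable_const_mul _).aemeasurable]
    exact (measurable_id.pow_const k).aestronglyMeasurable
  have h2 : ∫ x : ℝ, ((-1 : ℝ) * x) ^ k ∂(gaussianReal 0 1)
      = - ∫ x : ℝ, x ^ k ∂(gaussianReal 0 1) := by
    simp_rw [mul_pow, hk.neg_one_pow, neg_one_mul]
    exact integral_neg _
  linarith [h, h2]

lemma G2_expand {Ω : Type*} {n : ℕ} (Nn : Ω → Fin n → ℝ) (x : Fin n → ℝ) :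
    (fun ω => (∑ i, x i * Nn ω i) ^ 2)
    = fun ω => ∑ i, ∑ j, (x i * x j) * (Nn ω i * Nn ω j) := by
  funext ω
  rw [sq, Finset.sum_mul_sum]
  exact Finset.sum_congr rfl fun i _ => Finset.sum_congr rfl fun j _ => by ring

lemma G3_expand {Ω : Type*} {n : ℕ} (Nn : Ω → Fin n → ℝ) (x : Fin n → ℝ) :
    (fun ω => (∑ i, x i * Nn ω i) ^ 3)
    = fun ω => ∑ i, ∑ j, ∑ k, (x i * x j * x k) * (Nn ω i * Nn ω j * Nn ω k) := by
  funext ω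
  rw [pow_succ, sq, Finset.sum_mul_sum, Finset.sum_mul]
  refine Finset.sum_congr rfl fun i _ => ?_
  rw [Finset.sum_mul]
  refine Finset.sum_congr rfl fun j _ => ?_
  rw [Finset.mul_sum]
  exact Finset.sum_congr rfl fun k _ => by ring

lemma cube_integrable {Ω : Type*} [MeasurableSpace Ω] {P : Measure Ω} {f : Ω → ℝ}
    (hf : MemLp f 3 P) : Integrable (fun ω => f ω ^ 3) P := by
  have h := hf.integrable_norm_rpow (by norm_num) (by norm_num)
  have h3 : ((3 : ℝ≥0∞)).toReal = 3 := by norm_num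
  rw [h3] at h
  refine h.mono ?_ (Eventually.of_forall fun ω => ?_)
  · have := hf.aestronglyMeasurable
    exact ((this.mul this).mul this).congr (Eventually.of_forall fun ω => by
      simp [pow_succ, sq])
  · have heq : ‖f ω ^ 3‖ = ‖f ω‖ ^ (3 : ℕ) := by simp [abs_pow]
    have h2 : ‖f ω‖ ^ (3 : ℝ) = ‖f ω‖ ^ (3 : ℕ) := by
      rw [show (3:ℝ) = ((3:ℕ):ℝ) from by norm_num, Real.rpow_natCast]
    rw [heq]
    calc ‖f ω‖ ^ (3:ℕ) = ‖f ω‖ ^ (3:ℝ) := h2.symm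
      _ ≤ ‖‖f ω‖ ^ (3:ℝ)‖ := le_abs_self _

section Coord
variable {Ω : Type*} [MeasurableSpace Ω] {P : Measure Ω} [IsProbabilityMeasure P]

lemma integrable_pow_coord {N : Ω → ℝ} (hN : Measurable N)
    (hlaw : Measure.map N P = gaussianReal 0 1) (k : ℕ) :
    Integrable (fun ω => N ω ^ k) P := by
  have hg : AEStronglyMeasurable (fun x : ℝ => x ^ k) (Measure.map N P) :=
    (measurable_id.pow_const k).aestronglyMeasurable
  have h := integrable_pow_gaussianReal k
  rw [← hlaw, integrable_map_measure hg hN.aemeasurable] at h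
  exact h

lemma integral_pow_coord {N : Ω → ℝ} (hN : Measurable N)
    (hlaw : Measure.map N P = gaussianReal 0 1) (k : ℕ) :
    ∫ ω, N ω ^ k ∂P = ∫ x : ℝ, x ^ k ∂(gaussianReal 0 1) := by
  have hg : AEStronglyMeasurable (fun x : ℝ => x ^ k) (Measure.map N P) :=
    (measurable_id.pow_const k).aestronglyMeasurable
  rw [← hlaw, integral_map hN.aemeasurable hg]

variable {n : ℕ} {Nn : Ω → Fin n → ℝ}

lemma coord_meas (hNnmeas : Measurable Nn) (i : Fin n) : Measurable fun ω => Nn ω i :=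
  (measurable_pi_apply i).comp hNnmeas

section G
variable (hNnmeas : Measurable Nn)
  (hNniid : iIndepFun (fun i ω => Nn ω i) P)
  (hNngauss : ∀ i, Measure.map (fun ω => Nn ω i) P = gaussianReal 0 1)
include hNnmeas hNngauss

lemma int_pow_i (i : Fin n) (k : ℕ) : Integrable (fun ω => Nn ω i ^ k) P :=
  integrable_pow_coord (coord_meas hNnmeas i) (hNngauss i) k

lemma val1_i (i : Fin n) : ∫ ω, Nn ω i ∂P = 0 := by
  have h1 := integral_pow_coord (coord_meas hNnmeas i) (hNngauss i) 1
  have h2 := integral_odd_gaussianReal 1 odd_one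
  simpa [pow_one] using h1.trans h2

lemma val2_i (i : Fin n) : ∫ ω, Nn ω i ^ 2 ∂P = 1 := by
  rw [integral_pow_coord (coord_meas hNnmeas i) (hNngauss i) 2, integral_sq_gaussianReal]

lemma val3_i (i : Fin n) : ∫ ω, Nn ω i ^ 3 ∂P = 0 := by
  rw [integral_pow_coord (coord_meas hNnmeas i) (hNngauss i) 3,
    integral_odd_gaussianReal 3 (by decide)]

include hNniid

lemma int2_ij (i j : Fin n) : Integrable (fun ω => Nn ω i * Nn ω j) P := by
  by_cases hij : i = j
  · subst hij
    simpa [sq] using int_pow_i hNnmeas hNngauss i 2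
  · have hind : IndepFun (fun ω => Nn ω i) (fun ω => Nn ω j) P := hNniid.indepFun hij
    exact hind.integrable_mul (by simpa using int_pow_i hNnmeas hNngauss i 1)
      (by simpa using int_pow_i hNnmeas hNngauss j 1)

lemma val2_ij (i j : Fin n) :
    ∫ ω, Nn ω i * Nn ω j ∂P = if i = j then 1 else 0 := by
  by_cases hij : i = j
  · subst hij
    simpa [sq] using val2_i hNnmeas hNngauss i
  · have hind : IndepFun (fun ω => Nn ω i) (fun ω => Nn ω j) P := hNniid.indepFun hij
    rw [if_neg hij]
    have h := hind.integral_fun_mul_eq_mul_integral (coord_meas hNnmeas i).aestronglyMeasurable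
      (coord_meas hNnmeas j).aestronglyMeasurable
    rw [h, val1_i hNnmeas hNngauss i]
    ring

lemma indep_mul_k {i j k : Fin n} (hik : i ≠ k) (hjk : j ≠ k) :
    IndepFun (fun ω => Nn ω i * Nn ω j) (fun ω => Nn ω k) P := by
  have h := hNniid.indepFun_prodMk (coord_meas hNnmeas) i j k hik hjk
  have := h.comp (measurable_fst.mul measurable_snd) measurable_id
  exact this

lemma int3_ijk (i j k : Fin n) : Integrable (fun ω => Nn ω i * Nn ω j * Nn ω k) P := by
  by_cases hik : i = k
  · subst hik
    by_cases hij : i = j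
    · subst hij
      simpa [pow_succ, sq, mul_assoc, mul_comm, mul_left_comm] using
        int_pow_i hNnmeas hNngauss i 3
    · have hind : IndepFun (fun ω => Nn ω i * Nn ω i) (fun ω => Nn ω j) P :=
        indep_mul_k hNnmeas hNniid hNngauss hij hij
      have h := hind.integrable_mul (int2_ij hNnmeas hNniid hNngauss i i)
        (by simpa using int_pow_i hNnmeas hNngauss j 1)
      refine h.congr (Eventually.of_forall fun ω => ?_)
      show Nn ω i * Nn ω i * Nn ω j = Nn ω i * Nn ω j * Nn ω i
      ring
  · by_cases hjk : j = k
    · subst hjk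
      by_cases hij : i = j
      · subst hij
        simpa [pow_succ, sq, mul_assoc] using int_pow_i hNnmeas hNngauss i 3
      · have hij' : j ≠ i := fun h => hij h.symm
        have hind : IndepFun (fun ω => Nn ω j * Nn ω j) (fun ω => Nn ω i) P :=
          indep_mul_k hNnmeas hNniid hNngauss hij' hij'
        have h := hind.integrable_mul (int2_ij hNnmeas hNniid hNngauss j j)
          (by simpa using int_pow_i hNnmeas hNngauss i 1)
        refine h.congr (Eventually.of_forall fun ω => ?_)
        show Nn ω j * Nn ω j * Nn ω i = Nn ω i * Nn ω j * Nn ω j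
        ring
    · have hind := indep_mul_k hNnmeas hNniid hNngauss hik hjk
      have h := hind.integrable_mul (int2_ij hNnmeas hNniid hNngauss i j)
        (by simpa using int_pow_i hNnmeas hNngauss k 1)
      exact h

lemma val3_ijk (i j k : Fin n) : ∫ ω, Nn ω i * Nn ω j * Nn ω k ∂P = 0 := by
  by_cases hik : i = k
  · subst hik
    by_cases hij : i = j
    · subst hij
      have := val3_i hNnmeas hNngauss i
      have heq : (fun ω => Nn ω i * Nn ω i * Nn ω i) = fun ω => Nn ω i ^ 3 := by
        funext ω; ring
      rw [heq]
      exact this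
    · have hind : IndepFun (fun ω => Nn ω i * Nn ω i) (fun ω => Nn ω j) P :=
        indep_mul_k hNnmeas hNniid hNngauss hij hij
      have heq : (fun ω => Nn ω i * Nn ω j * Nn ω i) = fun ω => (Nn ω i * Nn ω i) * Nn ω j := by
        funext ω; ring
      calc ∫ ω, Nn ω i * Nn ω j * Nn ω i ∂P
          = ∫ ω, (Nn ω i * Nn ω i) * Nn ω j ∂P := by rw [heq]
        _ = (∫ ω, Nn ω i * Nn ω i ∂P) * ∫ ω, Nn ω j ∂P :=
            hind.integral_fun_mul_eq_mul_integral ((coord_meas hNnmeas i).mul (coord_meas hNnmeas i)).aestronglyMeasurable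
              (coord_meas hNnmeas j).aestronglyMeasurable
        _ = 0 := by rw [val1_i hNnmeas hNngauss j]; ring
  · by_cases hjk : j = k
    · subst hjk
      have hij' : j ≠ i := fun h => hik (h ▸ rfl)
      have hind : IndepFun (fun ω => Nn ω j * Nn ω j) (fun ω => Nn ω i) P :=
        indep_mul_k hNnmeas hNniid hNngauss hij' hij'
      · have heq : (fun ω => Nn ω i * Nn ω j * Nn ω j) = fun ω => (Nn ω j * Nn ω j) * Nn ω i := by
          funext ω; ring
        calc ∫ ω, Nn ω i * Nn ω j * Nn ω j ∂P
            = ∫ ω, (Nn ω j * Nn ω j) * Nn ω i ∂P := by rw [heq]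
          _ = (∫ ω, Nn ω j * Nn ω j ∂P) * ∫ ω, Nn ω i ∂P :=
              hind.integral_fun_mul_eq_mul_integral ((coord_meas hNnmeas j).mul (coord_meas hNnmeas j)).aestronglyMeasurable
                (coord_meas hNnmeas i).aestronglyMeasurable
          _ = 0 := by rw [val1_i hNnmeas hNngauss i]; ring
    · have hind := indep_mul_k hNnmeas hNniid hNngauss hik hjk
      have h := hind.integral_fun_mul_eq_mul_integral ((coord_meas hNnmeas i).mul (coord_meas hNnmeas j)).aestronglyMeasurable
        (coord_meas hNnmeas k).aestronglyMeasurable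
      rw [h, val1_i hNnmeas hNngauss k]
      ring


variable (x : Fin n → ℝ)

lemma G_meas : Measurable fun ω => ∑ i, x i * Nn ω i :=
  Finset.measurable_sum _ fun i _ => (coord_meas hNnmeas i).const_mul (x i)

lemma G_int1 : Integrable (fun ω => ∑ i, x i * Nn ω i) P :=
  integrable_finset_sum _ fun i _ =>
    (by simpa using (int_pow_i hNnmeas hNngauss i 1).const_mul (x i))

lemma G_val1 : ∫ ω, ∑ i, x i * Nn ω i ∂P = 0 := by
  rw [integral_finset_sum _ fun i _ =>
    (by simpa using (int_pow_i hNnmeas hNngauss i 1).const_mul (x i) :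
      Integrable (fun ω => x i * Nn ω i) P)]
  have h : ∀ i, ∫ ω, x i * Nn ω i ∂P = 0 := fun i => by
    rw [integral_const_mul, val1_i hNnmeas hNngauss i, mul_zero]
  simp [h]

include hNniid

lemma G_int2 : Integrable (fun ω => (∑ i, x i * Nn ω i) ^ 2) P := by
  rw [G2_expand Nn x]
  exact integrable_finset_sum _ fun i _ => integrable_finset_sum _ fun j _ =>
    (int2_ij hNnmeas hNniid hNngauss i j).const_mul _

lemma G_val2 : ∫ ω, (∑ i, x i * Nn ω i) ^ 2 ∂P = ∑ i, x i ^ 2 := by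
  rw [G2_expand Nn x, integral_finset_sum _ fun i _ => integrable_finset_sum _ fun j _ =>
    (int2_ij hNnmeas hNniid hNngauss i j).const_mul _]
  have h1 : ∀ i : Fin n, ∫ ω, ∑ j, (x i * x j) * (Nn ω i * Nn ω j) ∂P = x i ^ 2 := by
    intro i
    rw [integral_finset_sum _ fun j _ => (int2_ij hNnmeas hNniid hNngauss i j).const_mul _]
    have h2 : ∀ j : Fin n, ∫ ω, (x i * x j) * (Nn ω i * Nn ω j) ∂P
        = if i = j then x i * x j else 0 := by
      intro j
      rw [integral_const_mul, val2_ij hNnmeas hNniid hNngauss i j]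
      by_cases h : i = j <;> simp [h]
    simp only [h2]
    simp [Finset.sum_ite_eq, sq]
  simp only [h1]

lemma G_int3 : Integrable (fun ω => (∑ i, x i * Nn ω i) ^ 3) P := by
  rw [G3_expand Nn x]
  exact integrable_finset_sum _ fun i _ => integrable_finset_sum _ fun j _ =>
    integrable_finset_sum _ fun k _ =>
      (int3_ijk hNnmeas hNniid hNngauss i j k).const_mul _

lemma G_val3 : ∫ ω, (∑ i, x i * Nn ω i) ^ 3 ∂P = 0 := by
  rw [G3_expand Nn x, integral_finset_sum _ fun i _ => integrable_finset_sum _ fun j _ =>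
    integrable_finset_sum _ fun k _ => (int3_ijk hNnmeas hNniid hNngauss i j k).const_mul _]
  have h1 : ∀ i : Fin n, ∫ ω, ∑ j, ∑ k, (x i * x j * x k) * (Nn ω i * Nn ω j * Nn ω k) ∂P
      = 0 := by
    intro i
    rw [integral_finset_sum _ fun j _ => integrable_finset_sum _ fun k _ =>
      (int3_ijk hNnmeas hNniid hNngauss i j k).const_mul _]
    have h2 : ∀ j : Fin n, ∫ ω, ∑ k, (x i * x j * x k) * (Nn ω i * Nn ω j * Nn ω k) ∂P = 0 := by
      intro j
      rw [integral_finset_sum _ fun k _ => (int3_ijk hNnmeas hNniid hNngauss i j k).const_mul _]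
      have h3 : ∀ k : Fin n, ∫ ω, (x i * x j * x k) * (Nn ω i * Nn ω j * Nn ω k) ∂P = 0 := by
        intro k
        rw [integral_const_mul, val3_ijk hNnmeas hNniid hNngauss i j k, mul_zero]
      simp [h3]
    simp [h2]
  simp [h1]

end G
end Coord

set_option maxHeartbeats 1000000 in
/-- For `Y = γ0 Z + √Z Nn` with `Z` nonnegative with finite third moment,
independent of the standard Gaussian vector `Nn`, `γ0 ≠ 0`, and any `x ≠ 0`, the third central
moment of `⟨x,Y⟩` equals `‖x‖³ (‖γ0‖³ φ³ m₃(Z) + 3 ‖γ0‖ φ Var(Z))`, where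
`φ = ⟨x,γ0⟩/(‖x‖‖γ0‖)` and `m₃(Z) = E[(Z − E Z)³]`; consequently, if `Var(⟨x,Y⟩) > 0`, the
skewness of `⟨x,Y⟩` equals
`(‖γ0‖³ φ³ m₃(Z) + 3‖γ0‖ φ Var(Z)) / (‖γ0‖² φ² Var(Z) + E[Z])^(3/2)`. -/
theorem statement3 {Ω : Type*} [MeasurableSpace Ω] (P : Measure Ω) [IsProbabilityMeasure P]
    {n : ℕ} (Z : Ω → ℝ) (Nn : Ω → Fin n → ℝ)
    (hZmeas : Measurable Z) (hZnonneg : ∀ ω, 0 ≤ Z ω) (hZ3 : MemLp Z 3 P)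
    (hNnmeas : Measurable Nn)
    (hNniid : iIndepFun (fun i ω => Nn ω i) P)
    (hNngauss : ∀ i, Measure.map (fun ω => Nn ω i) P = gaussianReal 0 1)
    (hindepZNn : IndepFun Z Nn P)
    (γ0 : Fin n → ℝ) (hγ0ne : γ0 ≠ 0) (x : Fin n → ℝ) (hxne : x ≠ 0)
    (W : Ω → ℝ) (hW : W = fun ω => ∑ i, x i * (γ0 i * Z ω + Real.sqrt (Z ω) * Nn ω i))
    (b φ : ℝ) (hb : b = Real.sqrt (∑ i, γ0 i ^ 2))
    (hφ : φ = (∑ i, x i * γ0 i) / (Real.sqrt (∑ i, x i ^ 2) * Real.sqrt (∑ i, γ0 i ^ 2))) :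
    (∫ ω, (W ω - ∫ ω', W ω' ∂P) ^ 3 ∂P)
      = Real.sqrt (∑ i, x i ^ 2) ^ 3 *
        (b ^ 3 * φ ^ 3 * (∫ ω, (Z ω - ∫ ω', Z ω' ∂P) ^ 3 ∂P) + 3 * b * φ * variance Z P) ∧
    (0 < variance W P →
      (∫ ω, (W ω - ∫ ω', W ω' ∂P) ^ 3 ∂P) / variance W P ^ ((3 : ℝ) / 2)
        = (b ^ 3 * φ ^ 3 * (∫ ω, (Z ω - ∫ ω', Z ω' ∂P) ^ 3 ∂P) + 3 * b * φ * variance Z P)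
          / (b ^ 2 * φ ^ 2 * variance Z P + ∫ ω, Z ω ∂P) ^ ((3 : ℝ) / 2)) := by
  have hGmeas : Measurable fun ω => ∑ i, x i * Nn ω i := G_meas hNnmeas hNniid hNngauss x
  have hIG1 := G_int1 hNnmeas hNniid hNngauss x
  have hEG1 := G_val1 hNnmeas hNniid hNngauss x
  have hIG2 := G_int2 hNnmeas hNniid hNngauss x
  have hEG2 := G_val2 hNnmeas hNniid hNngauss x
  have hIG3 := G_int3 hNnmeas hNniid hNngauss x
  have hEG3 := G_val3 hNnmeas hNniid hNngauss x
  set G : Ω → ℝ := fun ω => ∑ i, x i * Nn ω i with hG_def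
  set C : ℝ := ∫ ω', Z ω' ∂P with hC_def
  set t : ℝ := ∑ i, x i ^ 2 with ht_def
  set a : ℝ := ∑ i, x i * γ0 i with ha_def
  -- positivity facts
  have ht_pos : 0 < t := by
    obtain ⟨i, hi⟩ := Function.ne_iff.mp hxne
    exact Finset.sum_pos' (fun j _ => sq_nonneg _)
      ⟨i, Finset.mem_univ i, lt_of_le_of_ne (sq_nonneg _) (Ne.symm (pow_ne_zero 2 hi))⟩
  have hst_pos : 0 < Real.sqrt t := Real.sqrt_pos.2 ht_pos
  have hst_sq : Real.sqrt t ^ 2 = t := Real.sq_sqrt ht_pos.le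
  have hbp : 0 < Real.sqrt (∑ i, γ0 i ^ 2) := by
    obtain ⟨i, hi⟩ := Function.ne_iff.mp hγ0ne
    exact Real.sqrt_pos.2 (Finset.sum_pos' (fun j _ => sq_nonneg _)
      ⟨i, Finset.mem_univ i, lt_of_le_of_ne (sq_nonneg _) (Ne.symm (pow_ne_zero 2 hi))⟩)
  have hsb : Real.sqrt t * b * φ = a := by
    rw [hφ, hb]
    field_simp
  -- Z basics
  have hZ2 : MemLp Z 2 P := hZ3.mono_exponent (by norm_num)
  have hZ1i : Integrable Z P := hZ3.integrable (by norm_num)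
  have hZC3 : MemLp (fun ω => Z ω - C) 3 P := hZ3.sub (memLp_const C)
  have hZC2 : MemLp (fun ω => Z ω - C) 2 P := hZC3.mono_exponent (by norm_num)
  have IVar2 : Integrable (fun ω => (Z ω - C) ^ 2) P := hZC2.integrable_sq
  have hsqrtZmeas : Measurable fun ω => Real.sqrt (Z ω) := hZmeas.sqrt
  -- dominating function
  have hBmem : MemLp (fun ω => 1 + |C| + Z ω) 3 P := (memLp_const (1 + |C|)).add hZ3
  have hDint : Integrable (fun ω => (1 + |C| + Z ω) ^ 3) P := cube_integrable hBmem
  have hB0 : ∀ ω, (0:ℝ) ≤ 1 + |C| + Z ω := fun ω => by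
    have := hZnonneg ω; have := abs_nonneg C; linarith
  have hB1 : ∀ ω, (1:ℝ) ≤ 1 + |C| + Z ω := fun ω => by
    have := hZnonneg ω; have := abs_nonneg C; linarith
  have hfacts : ∀ ω, |Z ω - C| ≤ 1 + |C| + Z ω := fun ω => by
    have h1 := neg_abs_le C; have h2 := le_abs_self C; have h3 := hZnonneg ω
    rw [abs_le]; constructor <;> nlinarith
  have hsqrt_le : ∀ ω, Real.sqrt (Z ω) ≤ 1 + |C| + Z ω := fun ω => by
    have h := Real.sqrt_le_sqrt (show Z ω ≤ (1 + Z ω) ^ 2 by nlinarith [hZnonneg ω])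
    rw [Real.sqrt_sq (by linarith [hZnonneg ω])] at h
    have := abs_nonneg C
    linarith
  have hmono : ∀ f : Ω → ℝ, AEStronglyMeasurable f P →
      (∀ ω, |f ω| ≤ (1 + |C| + Z ω) ^ 3) → Integrable f P := by
    intro f hfm hbd
    refine hDint.mono hfm (Eventually.of_forall fun ω => ?_)
    rw [Real.norm_eq_abs, Real.norm_eq_abs, abs_of_nonneg (pow_nonneg (hB0 ω) 3)]
    exact hbd ω
  -- integrable pieces
  have IU3 : Integrable (fun ω => (Z ω - C) ^ 3) P := by
    refine hmono _ ((hZmeas.sub measurable_const).pow_const 3).aestronglyMeasurable fun ω => ?_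
    calc |(Z ω - C) ^ 3| = |Z ω - C| ^ 3 := abs_pow _ 3
      _ ≤ (1 + |C| + Z ω) ^ 3 := pow_le_pow_left₀ (abs_nonneg _) (hfacts ω) 3
  have IK : Integrable (fun ω => (Z ω - C) ^ 2 * Real.sqrt (Z ω)) P := by
    refine hmono _ (((hZmeas.sub measurable_const).pow_const 2).mul
      hsqrtZmeas).aestronglyMeasurable fun ω => ?_
    have h4 : (Z ω - C) ^ 2 ≤ (1 + |C| + Z ω) ^ 2 := by
      have := pow_le_pow_left₀ (abs_nonneg (Z ω - C)) (hfacts ω) 2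
      rwa [sq_abs] at this
    rw [abs_of_nonneg (mul_nonneg (sq_nonneg _) (Real.sqrt_nonneg _))]
    calc (Z ω - C) ^ 2 * Real.sqrt (Z ω) ≤ (1 + |C| + Z ω) ^ 2 * (1 + |C| + Z ω) :=
        mul_le_mul h4 (hsqrt_le ω) (Real.sqrt_nonneg _) (pow_nonneg (hB0 ω) 2)
      _ = (1 + |C| + Z ω) ^ 3 := by ring
  have IE : Integrable (fun ω => (Z ω - C) * Real.sqrt (Z ω)) P := by
    refine hmono _ ((hZmeas.sub measurable_const).mul hsqrtZmeas).aestronglyMeasurable fun ω => ?_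
    rw [abs_mul, abs_of_nonneg (Real.sqrt_nonneg _)]
    calc |Z ω - C| * Real.sqrt (Z ω) ≤ (1 + |C| + Z ω) * (1 + |C| + Z ω) :=
        mul_le_mul (hfacts ω) (hsqrt_le ω) (Real.sqrt_nonneg _) (hB0 ω)
      _ ≤ (1 + |C| + Z ω) ^ 3 := by nlinarith [hB1 ω, hB0 ω]
  have IL : Integrable (fun ω => (Z ω - C) * Z ω) P := by
    refine hmono _ ((hZmeas.sub measurable_const).mul hZmeas).aestronglyMeasurable fun ω => ?_
    rw [abs_mul, abs_of_nonneg (hZnonneg ω)]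
    calc |Z ω - C| * Z ω ≤ (1 + |C| + Z ω) * (1 + |C| + Z ω) :=
        mul_le_mul (hfacts ω) (by linarith [abs_nonneg C]) (hZnonneg ω) (hB0 ω)
      _ ≤ (1 + |C| + Z ω) ^ 3 := by nlinarith [hB1 ω, hB0 ω]
  have IM : Integrable (fun ω => Z ω * Real.sqrt (Z ω)) P := by
    refine hmono _ (hZmeas.mul hsqrtZmeas).aestronglyMeasurable fun ω => ?_
    rw [abs_of_nonneg (mul_nonneg (hZnonneg ω) (Real.sqrt_nonneg _))]
    calc Z ω * Real.sqrt (Z ω) ≤ (1 + |C| + Z ω) * (1 + |C| + Z ω) :=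
        mul_le_mul (by linarith [abs_nonneg C]) (hsqrt_le ω) (Real.sqrt_nonneg _) (hB0 ω)
      _ ≤ (1 + |C| + Z ω) ^ 3 := by nlinarith [hB1 ω, hB0 ω]
  have IS : Integrable (fun ω => Real.sqrt (Z ω)) P := by
    refine hmono _ hsqrtZmeas.aestronglyMeasurable fun ω => ?_
    rw [abs_of_nonneg (Real.sqrt_nonneg _)]
    calc Real.sqrt (Z ω) ≤ 1 + |C| + Z ω := hsqrt_le ω
      _ ≤ (1 + |C| + Z ω) ^ 3 := le_self_pow₀ (hB1 ω) (by norm_num)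
  -- independence
  have hgmeas : Measurable fun y : Fin n → ℝ => ∑ i, x i * y i :=
    Finset.measurable_sum _ fun i _ => (measurable_pi_apply i).const_mul _
  have hindKG : IndepFun (fun ω => (Z ω - C) ^ 2 * Real.sqrt (Z ω)) G P :=
    hindepZNn.comp (((measurable_id.sub_const C).pow_const 2).mul measurable_id.sqrt) hgmeas
  have hindSG : IndepFun (fun ω => Real.sqrt (Z ω)) G P :=
    hindepZNn.comp measurable_id.sqrt hgmeas
  have hindEG : IndepFun (fun ω => (Z ω - C) * Real.sqrt (Z ω)) G P :=
    hindepZNn.comp ((measurable_id.sub_const C).mul measurable_id.sqrt) hgmeas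
  have hindLG2 : IndepFun (fun ω => (Z ω - C) * Z ω) (fun ω => G ω ^ 2) P :=
    hindepZNn.comp ((measurable_id.sub_const C).mul measurable_id) (hgmeas.pow_const 2)
  have hindZG2 : IndepFun Z (fun ω => G ω ^ 2) P :=
    hindepZNn.comp measurable_id (hgmeas.pow_const 2)
  have hindMG3 : IndepFun (fun ω => Z ω * Real.sqrt (Z ω)) (fun ω => G ω ^ 3) P :=
    hindepZNn.comp (measurable_id.mul measurable_id.sqrt) (hgmeas.pow_const 3)
  -- expectation values
  have hEZC : ∫ ω, Z ω - C ∂P = 0 := by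
    rw [integral_sub hZ1i (integrable_const C), integral_const]
    simp [← hC_def]
  have hvar : variance Z P = ∫ ω, (Z ω - C) ^ 2 ∂P := by
    rw [variance_eq_integral hZ2.aemeasurable]
  have hEL : ∫ ω, (Z ω - C) * Z ω ∂P = variance Z P := by
    have hpt : (fun ω => (Z ω - C) * Z ω) = fun ω => (Z ω - C) ^ 2 + C * (Z ω - C) :=
      funext fun ω => by ring
    have hZCint : Integrable (fun ω => Z ω - C) P := hZ1i.sub (integrable_const C)
    rw [hpt, integral_add IVar2 (hZCint.const_mul C),
      integral_const_mul, hEZC, hvar]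
    ring
  have hEKG : ∫ ω, (Z ω - C) ^ 2 * Real.sqrt (Z ω) * G ω ∂P = 0 := by
    rw [hindKG.integral_fun_mul_eq_mul_integral IK.aestronglyMeasurable hIG1.aestronglyMeasurable, hEG1, mul_zero]
  have hESG : ∫ ω, Real.sqrt (Z ω) * G ω ∂P = 0 := by
    rw [hindSG.integral_fun_mul_eq_mul_integral IS.aestronglyMeasurable hIG1.aestronglyMeasurable, hEG1, mul_zero]
  have hEEG : ∫ ω, (Z ω - C) * Real.sqrt (Z ω) * G ω ∂P = 0 := by
    rw [hindEG.integral_fun_mul_eq_mul_integral IE.aestronglyMeasurable hIG1.aestronglyMeasurable, hEG1, mul_zero]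
  have hELG2 : ∫ ω, (Z ω - C) * Z ω * G ω ^ 2 ∂P = variance Z P * t := by
    rw [hindLG2.integral_fun_mul_eq_mul_integral IL.aestronglyMeasurable hIG2.aestronglyMeasurable, hEG2, hEL]
  have hEZG2 : ∫ ω, Z ω * G ω ^ 2 ∂P = C * t := by
    rw [hindZG2.integral_fun_mul_eq_mul_integral hZ1i.aestronglyMeasurable hIG2.aestronglyMeasurable, hEG2, ← hC_def]
  have hEMG3 : ∫ ω, Z ω * Real.sqrt (Z ω) * G ω ^ 3 ∂P = 0 := by
    rw [hindMG3.integral_fun_mul_eq_mul_integral IM.aestronglyMeasurable hIG3.aestronglyMeasurable, hEG3, mul_zero]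
  -- W decomposition
  have hWeq : W = fun ω => a * Z ω + Real.sqrt (Z ω) * G ω := by
    rw [hW]
    funext ω
    show ∑ i, x i * (γ0 i * Z ω + Real.sqrt (Z ω) * Nn ω i)
        = (∑ i, x i * γ0 i) * Z ω + Real.sqrt (Z ω) * ∑ i, x i * Nn ω i
    rw [Finset.sum_mul, Finset.mul_sum, ← Finset.sum_add_distrib]
    exact Finset.sum_congr rfl fun i _ => by ring
  have hISG : Integrable (fun ω => Real.sqrt (Z ω) * G ω) P :=
    hindSG.integrable_mul IS hIG1
  have hEW : ∫ ω', W ω' ∂P = a * C := by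
    rw [hWeq, integral_add (hZ1i.const_mul a) hISG, integral_const_mul, hESG, ← hC_def]
    ring
  have hIKG : Integrable (fun ω => (Z ω - C) ^ 2 * Real.sqrt (Z ω) * G ω) P :=
    hindKG.integrable_mul IK hIG1
  have hILG2 : Integrable (fun ω => (Z ω - C) * Z ω * G ω ^ 2) P :=
    hindLG2.integrable_mul IL hIG2
  have hIMG3 : Integrable (fun ω => Z ω * Real.sqrt (Z ω) * G ω ^ 3) P :=
    hindMG3.integrable_mul IM hIG3
  -- part 1
  have hcube : (fun ω => (W ω - ∫ ω', W ω' ∂P) ^ 3) = fun ω =>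
      a ^ 3 * (Z ω - C) ^ 3 + 3 * a ^ 2 * ((Z ω - C) ^ 2 * Real.sqrt (Z ω) * G ω)
      + 3 * a * ((Z ω - C) * Z ω * G ω ^ 2) + Z ω * Real.sqrt (Z ω) * G ω ^ 3 := by
    funext ω
    rw [hEW]
    have hWω : W ω = a * Z ω + Real.sqrt (Z ω) * G ω := by rw [hWeq]
    rw [hWω]
    have hs := Real.sq_sqrt (hZnonneg ω)
    linear_combination (3 * a * (Z ω - C) * G ω ^ 2 + Real.sqrt (Z ω) * G ω ^ 3) * hs
  have hpart1 : (∫ ω, (W ω - ∫ ω', W ω' ∂P) ^ 3 ∂P)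
      = Real.sqrt t ^ 3 *
        (b ^ 3 * φ ^ 3 * (∫ ω, (Z ω - C) ^ 3 ∂P) + 3 * b * φ * variance Z P) := by
    have hA1 : Integrable (fun ω => a ^ 3 * (Z ω - C) ^ 3) P := IU3.const_mul _
    have hA2 : Integrable (fun ω => 3 * a ^ 2 * ((Z ω - C) ^ 2 * Real.sqrt (Z ω) * G ω)) P :=
      hIKG.const_mul _
    have hA3 : Integrable (fun ω => 3 * a * ((Z ω - C) * Z ω * G ω ^ 2)) P :=
      hILG2.const_mul _
    have hA12 : Integrable (fun ω => a ^ 3 * (Z ω - C) ^ 3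
        + 3 * a ^ 2 * ((Z ω - C) ^ 2 * Real.sqrt (Z ω) * G ω)) P := hA1.add hA2
    have hA123 : Integrable (fun ω => a ^ 3 * (Z ω - C) ^ 3
        + 3 * a ^ 2 * ((Z ω - C) ^ 2 * Real.sqrt (Z ω) * G ω)
        + 3 * a * ((Z ω - C) * Z ω * G ω ^ 2)) P := hA12.add hA3
    rw [hcube]
    rw [integral_add hA123 hIMG3, integral_add hA12 hA3, integral_add hA1 hA2,
      integral_const_mul, integral_const_mul, integral_const_mul, hEKG, hELG2, hEMG3]
    linear_combination (-(∫ ω, (Z ω - C) ^ 3 ∂P) * (a ^ 2 + a * (Real.sqrt t * b * φ)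
      + (Real.sqrt t * b * φ) ^ 2) - 3 * variance Z P * t) * hsb
      + (-3 * variance Z P * (Real.sqrt t * b * φ)) * hst_sq
  refine ⟨hpart1, fun hVarWpos => ?_⟩
  -- variance of W
  have hWmem : MemLp W 2 P := by
    rw [hWeq]
    have h1 : MemLp (fun ω => a * Z ω) 2 P := hZ2.const_mul a
    have h2 : MemLp (fun ω => Real.sqrt (Z ω) * G ω) 2 P := by
      have hint : Integrable (fun ω => (Real.sqrt (Z ω) * G ω) ^ 2) P := by
        refine (hindZG2.integrable_mul hZ1i hIG2).congr (Eventually.of_forall fun ω => ?_)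
        show Z ω * G ω ^ 2 = (Real.sqrt (Z ω) * G ω) ^ 2
        rw [mul_pow, Real.sq_sqrt (hZnonneg ω)]
      exact (memLp_two_iff_integrable_sq
        (hsqrtZmeas.mul hGmeas).aestronglyMeasurable).2 hint
    exact h1.add h2
  have hsq2 : (fun ω => (W ω - ∫ ω', W ω' ∂P) ^ 2) = fun ω =>
      a ^ 2 * (Z ω - C) ^ 2 + 2 * a * ((Z ω - C) * Real.sqrt (Z ω) * G ω)
      + Z ω * G ω ^ 2 := by
    funext ω
    rw [hEW]
    have hWω : W ω = a * Z ω + Real.sqrt (Z ω) * G ω := by rw [hWeq]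
    rw [hWω]
    have hs := Real.sq_sqrt (hZnonneg ω)
    linear_combination (G ω ^ 2) * hs
  have hIEG : Integrable (fun ω => (Z ω - C) * Real.sqrt (Z ω) * G ω) P :=
    hindEG.integrable_mul IE hIG1
  have hIZG2 : Integrable (fun ω => Z ω * G ω ^ 2) P := hindZG2.integrable_mul hZ1i hIG2
  have hvarW : variance W P = a ^ 2 * variance Z P + C * t := by
    have h := variance_eq_integral hWmem.aemeasurable
    have h2 : variance W P = ∫ ω, (W ω - ∫ ω', W ω' ∂P) ^ 2 ∂P := by
      rw [h]
    have hB1' : Integrable (fun ω => a ^ 2 * (Z ω - C) ^ 2) P := IVar2.const_mul _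
    have hB2' : Integrable (fun ω => 2 * a * ((Z ω - C) * Real.sqrt (Z ω) * G ω)) P :=
      hIEG.const_mul _
    have hB12' : Integrable (fun ω => a ^ 2 * (Z ω - C) ^ 2
        + 2 * a * ((Z ω - C) * Real.sqrt (Z ω) * G ω)) P := hB1'.add hB2'
    rw [h2, hsq2, integral_add hB12' hIZG2, integral_add hB1' hB2',
      integral_const_mul, integral_const_mul, hEEG, hEZG2, hvar]
    ring
  have hden : variance W P = t * (b ^ 2 * φ ^ 2 * variance Z P + C) := by
    rw [hvarW]
    linear_combination (-(variance Z P) * (a + Real.sqrt t * b * φ)) * hsb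
      + variance Z P * (b * φ) ^ 2 * hst_sq
  have hdenpos : 0 < b ^ 2 * φ ^ 2 * variance Z P + C := by
    rw [hden] at hVarWpos
    nlinarith [hVarWpos, ht_pos]
  have hst3 : Real.sqrt t ^ 3 = t ^ ((3 : ℝ) / 2) := by
    rw [Real.sqrt_eq_rpow, ← Real.rpow_natCast (t ^ ((1 : ℝ) / 2)) 3,
      ← Real.rpow_mul ht_pos.le]
    norm_num
  rw [hpart1, hden, Real.mul_rpow ht_pos.le hdenpos.le, hst3,
    mul_div_mul_left _ _ (ne_of_gt (Real.rpow_pos_of_pos ht_pos _))]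
end

section
/- Let b > 0, V ≥ 0, E > 0, and m₃ be real numbers satisfying m₃·E ≥ 2V², and define S : [−1,1] → ℝ by S(φ) = ( b³m₃φ³ + 3bVφ ) / ( b²Vφ² + E )^{3/2}. Then S is monotone nondecreasing on [−1,1]. -/
/-- For `b > 0`, `V ≥ 0`, `E > 0`, `m₃ ∈ ℝ` with `m₃ E ≥ 2 V²`, the skewness
function `S(φ) = (b³ m₃ φ³ + 3 b V φ) / (b² V φ² + E)^(3/2)` is monotone nondecreasing on
`[−1,1]`. -/
theorem statement6 (b V E m₃ : ℝ) (hb : 0 < b) (hV : 0 ≤ V) (hE : 0 < E)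
    (hkey : 2 * V ^ 2 ≤ m₃ * E) :
    MonotoneOn
      (fun φ : ℝ => (b ^ 3 * m₃ * φ ^ 3 + 3 * b * V * φ)
        / (b ^ 2 * V * φ ^ 2 + E) ^ ((3 : ℝ) / 2))
      (Set.Icc (-1 : ℝ) 1) := by
  have hD : ∀ x : ℝ, 0 < b ^ 2 * V * x ^ 2 + E := by
    intro x
    have : 0 ≤ b ^ 2 * V * x ^ 2 :=
      mul_nonneg (mul_nonneg (sq_nonneg b) hV) (sq_nonneg x)
    linarith
  -- derivative of the whole function at any point x
  have hS : ∀ x : ℝ, HasDerivAt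
      (fun φ : ℝ => (b ^ 3 * m₃ * φ ^ 3 + 3 * b * V * φ)
        / (b ^ 2 * V * φ ^ 2 + E) ^ ((3 : ℝ) / 2))
      (((b ^ 3 * m₃ * (3 * x ^ 2) + 3 * b * V) * (b ^ 2 * V * x ^ 2 + E) ^ ((3 : ℝ) / 2)
        - (b ^ 3 * m₃ * x ^ 3 + 3 * b * V * x) *
          ((b ^ 2 * V * (2 * x)) * (3 / 2) * (b ^ 2 * V * x ^ 2 + E) ^ ((3 : ℝ) / 2 - 1)))
        / ((b ^ 2 * V * x ^ 2 + E) ^ ((3 : ℝ) / 2)) ^ 2) x := by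
    intro x
    have hN : HasDerivAt (fun φ : ℝ => b ^ 3 * m₃ * φ ^ 3 + 3 * b * V * φ)
        (b ^ 3 * m₃ * (3 * x ^ 2) + 3 * b * V) x := by
      have h1 : HasDerivAt (fun φ : ℝ => b ^ 3 * m₃ * φ ^ 3)
          (b ^ 3 * m₃ * (3 * x ^ 2)) x := by
        simpa using (hasDerivAt_pow 3 x).const_mul (b ^ 3 * m₃)
      have h2 : HasDerivAt (fun φ : ℝ => 3 * b * V * φ) (3 * b * V) x := by
        simpa using (hasDerivAt_id x).const_mul (3 * b * V)
      exact h1.add h2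
    have hDder : HasDerivAt (fun φ : ℝ => b ^ 2 * V * φ ^ 2 + E)
        (b ^ 2 * V * (2 * x)) x := by
      have h1 : HasDerivAt (fun φ : ℝ => b ^ 2 * V * φ ^ 2)
          (b ^ 2 * V * (2 * x)) x := by
        simpa using (hasDerivAt_pow 2 x).const_mul (b ^ 2 * V)
      simpa using h1.add_const E
    have hg : HasDerivAt (fun φ : ℝ => (b ^ 2 * V * φ ^ 2 + E) ^ ((3 : ℝ) / 2))
        ((b ^ 2 * V * (2 * x)) * (3 / 2) * (b ^ 2 * V * x ^ 2 + E) ^ ((3 : ℝ) / 2 - 1)) x :=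
      hDder.rpow_const (Or.inr (by norm_num))
    exact hN.div hg (ne_of_gt (Real.rpow_pos_of_pos (hD x) _))
  apply monotoneOn_of_deriv_nonneg (convex_Icc _ _)
  · exact Continuous.continuousOn (by
      refine Continuous.div (by continuity) ?_ ?_
      · exact (Continuous.rpow_const (by continuity) (fun x => Or.inr (by norm_num)))
      · intro x; exact ne_of_gt (Real.rpow_pos_of_pos (hD x) _))
  · intro x hx
    exact (hS x).differentiableAt.differentiableWithinAt
  · intro x hx
    rw [(hS x).deriv]
    set D := b ^ 2 * V * x ^ 2 + E with hDdef
    have hDpos : 0 < D := hD x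
    have hsplit : D ^ ((3 : ℝ) / 2) = D * D ^ ((1 : ℝ) / 2) := by
      rw [show ((3 : ℝ) / 2) = 1 + 1 / 2 by norm_num, Real.rpow_add hDpos, Real.rpow_one]
    have hexp : ((3 : ℝ) / 2 - 1) = (1 : ℝ) / 2 := by norm_num
    rw [hexp]
    set s := D ^ ((1 : ℝ) / 2) with hs
    have hspos : 0 < s := Real.rpow_pos_of_pos hDpos _
    apply div_nonneg _ (sq_nonneg _)
    rw [hsplit]
    have hbracket : 0 ≤ (b ^ 3 * m₃ * (3 * x ^ 2) + 3 * b * V) * D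
        - (b ^ 3 * m₃ * x ^ 3 + 3 * b * V * x) * (b ^ 2 * V * (2 * x)) * (3 / 2) := by
      have key : (b ^ 3 * m₃ * (3 * x ^ 2) + 3 * b * V) * D
          - (b ^ 3 * m₃ * x ^ 3 + 3 * b * V * x) * (b ^ 2 * V * (2 * x)) * (3 / 2)
          = 3 * b ^ 3 * x ^ 2 * (m₃ * E - 2 * V ^ 2) + 3 * b * V * E := by
        rw [hDdef]; ring
      rw [key]
      have h1 : 0 ≤ 3 * b ^ 3 * x ^ 2 * (m₃ * E - 2 * V ^ 2) := by
        apply mul_nonneg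
        · positivity
        · linarith
      have h2 : 0 ≤ 3 * b * V * E := by positivity
      linarith
    calc (0:ℝ) = s * 0 := by ring
      _ ≤ s * ((b ^ 3 * m₃ * (3 * x ^ 2) + 3 * b * V) * D
          - (b ^ 3 * m₃ * x ^ 3 + 3 * b * V * x) * (b ^ 2 * V * (2 * x)) * (3 / 2)) := by
          exact mul_le_mul_of_nonneg_left hbracket hspos.le
      _ = (b ^ 3 * m₃ * (3 * x ^ 2) + 3 * b * V) * (D * s)
          - (b ^ 3 * m₃ * x ^ 3 + 3 * b * V * x) * (b ^ 2 * V * (2 * x) * (3 / 2) * s) := by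
          ring
end

section
/- Let Z be a nonnegative real random variable independent of an n-dimensional standard Gaussian vector N_n, let μ0, γ0 ∈ ℝⁿ with γ0 ≠ 0, and Y = μ0 + γ0·Z + √Z·N_n. Let ρ be a law-invariant, cash-invariant, positively homogeneous risk functional on real random variables. Then for every x ∈ ℝⁿ with x ≠ 0, ρ(⟨x,Y⟩) = −⟨x,μ0⟩ + ρ( aZ + √Z·N )·‖x‖, where a = ‖γ0‖·cos[θ(γ0,x)] = ⟨x,γ0⟩/‖x‖ and N is a scalar standard normal random variable independent of Z. -/
open MeasureTheory ProbabilityTheory Real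
open scoped ENNReal NNReal

noncomputable def rotEquiv (c s : ℝ) (h : c^2 + s^2 = 1) : (ℝ × ℝ) ≃ᵐ (ℝ × ℝ) where
  toFun p := (c * p.1 + s * p.2, -s * p.1 + c * p.2)
  invFun p := (c * p.1 - s * p.2, s * p.1 + c * p.2)
  left_inv p := by
    ext
    · show c * (c * p.1 + s * p.2) - s * (-s * p.1 + c * p.2) = p.1; linear_combination p.1 * h
    · show s * (c * p.1 + s * p.2) + c * (-s * p.1 + c * p.2) = p.2; linear_combination p.2 * h
  right_inv p := by
    ext
    · show c * (c * p.1 - s * p.2) + s * (s * p.1 + c * p.2) = p.1; linear_combination p.1 * h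
    · show -s * (c * p.1 - s * p.2) + c * (s * p.1 + c * p.2) = p.2; linear_combination p.2 * h
  measurable_toFun := by
    show Measurable fun p : ℝ × ℝ => (c * p.1 + s * p.2, -s * p.1 + c * p.2)
    fun_prop
  measurable_invFun := by
    show Measurable fun p : ℝ × ℝ => (c * p.1 - s * p.2, s * p.1 + c * p.2)
    fun_prop

lemma rot_volume (c s : ℝ) (h : c^2 + s^2 = 1) :
    Measure.map (rotEquiv c s h) (volume : Measure (ℝ × ℝ)) = volume := by
  have hT : (⇑(rotEquiv c s h) : ℝ × ℝ → ℝ × ℝ)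
      = ⇑(Matrix.toLin (Module.Basis.finTwoProd ℝ) (Module.Basis.finTwoProd ℝ) !![c, s; -s, c]) := by
    funext p
    rw [Matrix.toLin_finTwoProd_apply]
    rfl
  have hdet : LinearMap.det
      (Matrix.toLin (Module.Basis.finTwoProd ℝ) (Module.Basis.finTwoProd ℝ) !![c, s; -s, c]) = 1 := by
    rw [LinearMap.det_toLin, Matrix.det_fin_two_of]
    nlinarith
  rw [hT, Measure.map_linearMap_addHaar_eq_smul_addHaar _ (by rw [hdet]; norm_num), hdet]
  simp

lemma stdprod_eq : (gaussianReal 0 1).prod (gaussianReal 0 1)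
    = (volume : Measure (ℝ × ℝ)).withDensity
        (fun p => gaussianPDF 0 1 p.1 * gaussianPDF 0 1 p.2) := by
  have h1 : gaussianReal 0 1 = volume.withDensity (gaussianPDF 0 1) :=
    gaussianReal_of_var_ne_zero 0 one_ne_zero
  refine Measure.prod_eq fun s t hs ht => ?_
  rw [Measure.volume_eq_prod, withDensity_apply _ (hs.prod ht), ← Measure.prod_restrict,
    lintegral_prod_mul (measurable_gaussianPDF 0 1).aemeasurable
      (measurable_gaussianPDF 0 1).aemeasurable, h1,
    withDensity_apply _ hs, withDensity_apply _ ht]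

lemma map_withDensity_equiv {α : Type*} [MeasurableSpace α] (μ : Measure α)
    (e : α ≃ᵐ α) (hvol : Measure.map e μ = μ) (h : α → ℝ≥0∞) (hh : Measurable h) :
    Measure.map e (μ.withDensity h) = μ.withDensity (fun a => h (e.symm a)) := by
  ext s hs
  rw [Measure.map_apply e.measurable hs, withDensity_apply _ (e.measurable hs),
    withDensity_apply _ hs]
  calc ∫⁻ a in ⇑e ⁻¹' s, h a ∂μ
      = ∫⁻ a in ⇑e ⁻¹' s, h (e.symm (e a)) ∂μ := by
        refine setLIntegral_congr_fun (e.measurable hs) ?_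
        intro a _; simp only [e.symm_apply_apply]
    _ = ∫⁻ a in s, h (e.symm a) ∂(Measure.map e μ) :=
        (setLIntegral_map hs (hh.comp e.symm.measurable) e.measurable).symm
    _ = ∫⁻ a in s, h (e.symm a) ∂μ := by rw [hvol]

lemma gpdf_mul (a b a' b' : ℝ) (hab : a^2 + b^2 = a'^2 + b'^2) :
    gaussianPDF 0 1 a * gaussianPDF 0 1 b = gaussianPDF 0 1 a' * gaussianPDF 0 1 b' := by
  have key : ∀ u w : ℝ, gaussianPDFReal 0 1 u * gaussianPDFReal 0 1 w
      = (√(2 * π))⁻¹ * (√(2 * π))⁻¹ * rexp (-(u^2 + w^2) / 2) := by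
    intro u w
    simp only [gaussianPDFReal, NNReal.coe_one, mul_one, sub_zero]
    rw [show -(u^2+w^2)/2 = -u^2/2 + -w^2/2 by ring, Real.exp_add]
    ring
  simp only [gaussianPDF]
  rw [← ENNReal.ofReal_mul (gaussianPDFReal_nonneg 0 1 a),
    ← ENNReal.ofReal_mul (gaussianPDFReal_nonneg 0 1 a'), key, key, hab]

lemma rot_map (c s : ℝ) (h : c^2 + s^2 = 1) :
    Measure.map (fun p : ℝ × ℝ => c * p.1 + s * p.2)
      ((gaussianReal 0 1).prod (gaussianReal 0 1)) = gaussianReal 0 1 := by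
  have hmeas : Measurable (fun p : ℝ × ℝ => gaussianPDF 0 1 p.1 * gaussianPDF 0 1 p.2) :=
    ((measurable_gaussianPDF 0 1).comp measurable_fst).mul
      ((measurable_gaussianPDF 0 1).comp measurable_snd)
  have hfun : (fun p : ℝ × ℝ => c * p.1 + s * p.2)
      = Prod.fst ∘ ⇑(rotEquiv c s h) := rfl
  have hinv : (fun a : ℝ × ℝ =>
        gaussianPDF 0 1 ((rotEquiv c s h).symm a).1
          * gaussianPDF 0 1 ((rotEquiv c s h).symm a).2)
      = fun p : ℝ × ℝ => gaussianPDF 0 1 p.1 * gaussianPDF 0 1 p.2 := by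
    funext p
    have h1 : ((rotEquiv c s h).symm p) = (c * p.1 - s * p.2, s * p.1 + c * p.2) := rfl
    rw [h1]
    exact gpdf_mul _ _ _ _ (by linear_combination (p.1^2 + p.2^2) * h)
  rw [hfun, ← Measure.map_map measurable_fst (rotEquiv c s h).measurable, stdprod_eq,
    map_withDensity_equiv _ _ (rot_volume c s h) _ hmeas]
  simp only [hinv]
  rw [← stdprod_eq, Measure.map_fst_prod]
  simp

lemma gauss_scale (v : ℝ≥0) :
    Measure.map (fun y : ℝ => Real.sqrt v * y) (gaussianReal 0 1) = gaussianReal 0 v := by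
  rw [show (fun y : ℝ => Real.sqrt v * y) = (fun y : ℝ => (Real.sqrt v) * y) from rfl]
  rw [gaussianReal_map_const_mul (Real.sqrt v)]
  congr 1
  · ring
  · ext
    simp [Real.sq_sqrt v.coe_nonneg]

lemma lin_map (c s : ℝ) :
    Measure.map (fun p : ℝ × ℝ => c * p.1 + s * p.2)
      ((gaussianReal 0 1).prod (gaussianReal 0 1))
      = gaussianReal 0 ⟨c^2 + s^2, by positivity⟩ := by
  by_cases hcs : c^2 + s^2 = 0
  · have hc : c = 0 := by nlinarith [sq_nonneg c, sq_nonneg s]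
    have hs : s = 0 := by nlinarith [sq_nonneg c, sq_nonneg s]
    subst hc hs
    have : @Eq ℝ≥0 ⟨(0:ℝ)^2 + 0^2, by positivity⟩ 0 := by ext; norm_num; rfl
    rw [this, gaussianReal_zero_var]
    simp only [zero_mul, zero_add]
    rw [show (fun _ : ℝ × ℝ => (0:ℝ)) = fun _ => (0:ℝ) from rfl, Measure.map_const]
    simp
  · set r : ℝ := Real.sqrt (c^2 + s^2) with hr
    have hr2 : r^2 = c^2 + s^2 := Real.sq_sqrt (by positivity)
    have hrpos : 0 < r := Real.sqrt_pos.mpr (lt_of_le_of_ne (by positivity) (Ne.symm hcs))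
    have hfun : (fun p : ℝ × ℝ => c * p.1 + s * p.2)
        = (fun y : ℝ => r * y) ∘ (fun p : ℝ × ℝ => (c/r) * p.1 + (s/r) * p.2) := by
      funext p
      simp only [Function.comp_apply]
      field_simp
    have hunit : (c/r)^2 + (s/r)^2 = 1 := by
      field_simp
      linarith [hr2]
    rw [hfun, ← Measure.map_map (by fun_prop) (by fun_prop), rot_map _ _ hunit,
      gaussianReal_map_const_mul]
    congr 1
    · ring
    · ext
      simp [hr2]
      rfl

lemma indep_add_gauss {Ω : Type*} [MeasurableSpace Ω] (P : Measure Ω) [IsProbabilityMeasure P]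
    (X Y : Ω → ℝ) (hX : Measurable X) (hY : Measurable Y) (hind : IndepFun X Y P)
    (v1 v2 : ℝ≥0) (hXg : Measure.map X P = gaussianReal 0 v1)
    (hYg : Measure.map Y P = gaussianReal 0 v2) :
    Measure.map (fun ω => X ω + Y ω) P = gaussianReal 0 (v1 + v2) := by
  have hjoint : Measure.map (fun ω => (X ω, Y ω)) P
      = (gaussianReal 0 v1).prod (gaussianReal 0 v2) := by
    rw [← hXg, ← hYg]
    exact (indepFun_iff_map_prod_eq_prod_map_map hX.aemeasurable hY.aemeasurable).mp hind
  have h1 : (fun ω => X ω + Y ω) = (fun p : ℝ × ℝ => p.1 + p.2) ∘ (fun ω => (X ω, Y ω)) := rfl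
  rw [h1, ← Measure.map_map (by fun_prop) (hX.prodMk hY), hjoint, ← gauss_scale v1,
    ← gauss_scale v2, Measure.map_prod_map _ _ (by fun_prop) (by fun_prop),
    Measure.map_map (by fun_prop) (by fun_prop)]
  have h2 : ((fun p : ℝ × ℝ => p.1 + p.2) ∘ Prod.map (fun y : ℝ => Real.sqrt v1 * y)
      (fun y : ℝ => Real.sqrt v2 * y))
      = fun p : ℝ × ℝ => Real.sqrt v1 * p.1 + Real.sqrt v2 * p.2 := rfl
  rw [h2, lin_map]
  congr 1
  ext
  simp [Real.sq_sqrt v1.coe_nonneg, Real.sq_sqrt v2.coe_nonneg]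
  rfl

lemma sum_gauss {Ω : Type*} [MeasurableSpace Ω] (P : Measure Ω) [IsProbabilityMeasure P]
    {n : ℕ} (Nn : Ω → Fin n → ℝ) (hNnmeas : Measurable Nn)
    (hiid : iIndepFun (fun i ω => Nn ω i) P)
    (hg : ∀ i, Measure.map (fun ω => Nn ω i) P = gaussianReal 0 1)
    (x : Fin n → ℝ) (T : Finset (Fin n)) :
    Measure.map (fun ω => ∑ i ∈ T, x i * Nn ω i) P
      = gaussianReal 0 ⟨∑ i ∈ T, (x i)^2, by positivity⟩ := by
  classical
  set g : Fin n → Ω → ℝ := fun i ω => x i * Nn ω i with hgdef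
  have hgmeas : ∀ i, Measurable (g i) := fun i =>
    ((measurable_pi_apply i).comp hNnmeas).const_mul (x i)
  have hgiid : iIndepFun g P := by
    have := hiid.comp (fun i (y : ℝ) => x i * y) (fun i => measurable_const_mul (x i))
    exact this
  have hgi : ∀ i, Measure.map (g i) P = gaussianReal 0 ⟨(x i)^2, by positivity⟩ := by
    intro i
    have h1 : g i = (fun y : ℝ => x i * y) ∘ (fun ω => Nn ω i) := rfl
    rw [h1, ← Measure.map_map (measurable_const_mul (x i))
      (show Measurable fun ω => Nn ω i by fun_prop), hg i, gaussianReal_map_const_mul]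
    congr 1
    · ring
    · ext; simp; rfl
  induction T using Finset.induction_on with
  | empty =>
      simp only [Finset.sum_empty]
      rw [Measure.map_const]
      simp only [measure_univ, one_smul]
      have : @Eq ℝ≥0 ⟨(0:ℝ), le_refl 0⟩ 0 := rfl
      rw [this, gaussianReal_zero_var]
  | @insert a T' ha ih =>
      have hsum_ms : Measurable (fun ω => ∑ i ∈ T', x i * Nn ω i) := by
        exact Finset.measurable_sum T' (fun i _ => hgmeas i)
      have hind : IndepFun (g a) (fun ω => ∑ i ∈ T', x i * Nn ω i) P := by
        have h2 : (fun ω => ∑ i ∈ T', x i * Nn ω i) = ∑ i ∈ T', g i := by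
          funext ω; rw [Finset.sum_apply]
        rw [h2]
        exact (hgiid.indepFun_finset_sum_of_notMem hgmeas ha).symm
      have hstep := indep_add_gauss P (g a) (fun ω => ∑ i ∈ T', x i * Nn ω i)
        (hgmeas a) hsum_ms hind _ _ (hgi a) ih
      have h3 : (fun ω => ∑ i ∈ insert a T', x i * Nn ω i)
          = fun ω => g a ω + ∑ i ∈ T', x i * Nn ω i := by
        funext ω; rw [Finset.sum_insert ha]
      rw [h3, hstep]
      congr 1
      ext
      simp [Finset.sum_insert ha]
      rfl

/-- For `Y = μ0 + γ0 Z + √Z Nn` with `Z` nonnegative independent of the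
standard Gaussian vector `Nn`, `γ0 ≠ 0`, and a law-invariant, cash-invariant, positively
homogeneous risk functional `ρ`, for every `x ≠ 0`:
`ρ(⟨x,Y⟩) = −⟨x,μ0⟩ + ρ(a Z + √Z N) ‖x‖` where `a = ⟨x,γ0⟩/‖x‖` and `N` is a scalar
standard normal independent of `Z`. -/
theorem statement8 {Ω : Type*} [MeasurableSpace Ω] (P : Measure Ω) [IsProbabilityMeasure P]
    {n : ℕ} (Z : Ω → ℝ) (Nn : Ω → Fin n → ℝ) (N : Ω → ℝ)
    (hZmeas : Measurable Z) (hZnonneg : ∀ ω, 0 ≤ Z ω)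
    (hNnmeas : Measurable Nn)
    (hNniid : iIndepFun (fun i ω => Nn ω i) P)
    (hNngauss : ∀ i, Measure.map (fun ω => Nn ω i) P = gaussianReal 0 1)
    (hindepZNn : IndepFun Z Nn P)
    (hNmeas : Measurable N)
    (hNgauss : Measure.map N P = gaussianReal 0 1)
    (hindepZN : IndepFun Z N P)
    (μ0 γ0 : Fin n → ℝ) (hγ0ne : γ0 ≠ 0)
    (Y : Ω → Fin n → ℝ)
    (hY : ∀ ω i, Y ω i = μ0 i + γ0 i * Z ω + Real.sqrt (Z ω) * Nn ω i)
    (ρ : (Ω → ℝ) → ℝ)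
    (hρ_law : ∀ W W' : Ω → ℝ, Measure.map W P = Measure.map W' P → ρ W = ρ W')
    (hρ_cash : ∀ (W : Ω → ℝ) (c : ℝ), ρ (fun ω => W ω + c) = ρ W - c)
    (hρ_hom : ∀ (W : Ω → ℝ) (c : ℝ), 0 < c → ρ (fun ω => c * W ω) = c * ρ W)
    (x : Fin n → ℝ) (hxne : x ≠ 0) :
    ρ (fun ω => ∑ i, x i * Y ω i)
      = -(∑ i, x i * μ0 i)
        + ρ (fun ω => ((∑ i, x i * γ0 i) / Real.sqrt (∑ i, x i ^ 2)) * Z ω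
            + Real.sqrt (Z ω) * N ω) * Real.sqrt (∑ i, x i ^ 2) := by
  classical
  set s2 : ℝ := ∑ i, x i ^ 2 with hs2
  have hs2pos : 0 < s2 := by
    obtain ⟨i, hi⟩ : ∃ i, x i ≠ 0 := by
      by_contra hcon
      push_neg at hcon
      exact hxne (funext hcon)
    exact Finset.sum_pos' (fun j _ => sq_nonneg (x j))
      ⟨i, Finset.mem_univ i, by positivity⟩
  set s : ℝ := Real.sqrt s2 with hsdef
  have hspos : 0 < s := Real.sqrt_pos.mpr hs2pos
  have hss : s * s = s2 := Real.mul_self_sqrt hs2pos.le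
  have hsq : s ^ 2 = s2 := by rw [sq]; exact hss
  set a : ℝ := (∑ i, x i * γ0 i) / s with hadef
  set m : ℝ := ∑ i, x i * μ0 i with hmdef
  set W : Ω → ℝ := fun ω => s⁻¹ * ∑ i, x i * Nn ω i with hWdef
  have hWmeas : Measurable W := by
    apply Measurable.const_mul
    exact Finset.measurable_sum _ (fun i _ =>
      (show Measurable fun ω => Nn ω i by fun_prop).const_mul (x i))
  -- W is standard gaussian
  have hWgauss : Measure.map W P = gaussianReal 0 1 := by
    have hsum := sum_gauss P Nn hNnmeas hNniid hNngauss x Finset.univ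
    have h1 : W = (fun y : ℝ => s⁻¹ * y) ∘ (fun ω => ∑ i, x i * Nn ω i) := rfl
    rw [h1, ← Measure.map_map (measurable_const_mul s⁻¹)
      (Finset.measurable_sum _ (fun i _ =>
        (show Measurable fun ω => Nn ω i by fun_prop).const_mul (x i))), hsum]
    erw [gaussianReal_map_const_mul]
    congr 1
    · ring
    · ext
      simp only [NNReal.coe_mul, NNReal.coe_one, NNReal.coe_mk]
      show s⁻¹ ^ 2 * (∑ i, x i ^ 2) = 1
      rw [← hs2, inv_pow, hsq, inv_mul_cancel₀ hs2pos.ne']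
  -- Z and W independent
  have hindepZW : IndepFun Z W P := by
    have hWc : W = (fun v : Fin n → ℝ => s⁻¹ * ∑ i, x i * v i) ∘ Nn := rfl
    rw [show Z = id ∘ Z from rfl, hWc]
    exact hindepZNn.comp measurable_id (by fun_prop)
  -- joint law equality
  have hjoint : Measure.map (fun ω => (Z ω, W ω)) P = Measure.map (fun ω => (Z ω, N ω)) P := by
    rw [(indepFun_iff_map_prod_eq_prod_map_map hZmeas.aemeasurable hWmeas.aemeasurable).mp
        hindepZW,
      (indepFun_iff_map_prod_eq_prod_map_map hZmeas.aemeasurable hNmeas.aemeasurable).mp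
        hindepZN, hWgauss, hNgauss]
  -- law invariance step
  have hlaw : ρ (fun ω => a * Z ω + Real.sqrt (Z ω) * W ω)
      = ρ (fun ω => a * Z ω + Real.sqrt (Z ω) * N ω) := by
    apply hρ_law
    have hF : Measurable (fun p : ℝ × ℝ => a * p.1 + Real.sqrt p.1 * p.2) := by fun_prop
    have e1 : (fun ω => a * Z ω + Real.sqrt (Z ω) * W ω)
        = (fun p : ℝ × ℝ => a * p.1 + Real.sqrt p.1 * p.2) ∘ (fun ω => (Z ω, W ω)) := rfl
    have e2 : (fun ω => a * Z ω + Real.sqrt (Z ω) * N ω)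
        = (fun p : ℝ × ℝ => a * p.1 + Real.sqrt p.1 * p.2) ∘ (fun ω => (Z ω, N ω)) := rfl
    rw [e1, e2, ← Measure.map_map hF (hZmeas.prodMk hWmeas),
      ← Measure.map_map hF (hZmeas.prodMk hNmeas), hjoint]
  -- algebraic identity
  have halg : (fun ω => ∑ i, x i * Y ω i)
      = fun ω => s * (a * Z ω + Real.sqrt (Z ω) * W ω) + m := by
    funext ω
    have hsa : s * a = ∑ i, x i * γ0 i := by
      rw [hadef, mul_div_assoc', mul_comm s, mul_div_assoc, div_self hspos.ne', mul_one]
    calc ∑ i, x i * Y ω i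
        = ∑ i, (x i * μ0 i + (x i * γ0 i) * Z ω + (x i * Nn ω i) * Real.sqrt (Z ω)) := by
          refine Finset.sum_congr rfl fun i _ => ?_
          rw [hY]; ring
      _ = m + (∑ i, x i * γ0 i) * Z ω + (∑ i, x i * Nn ω i) * Real.sqrt (Z ω) := by
          rw [Finset.sum_add_distrib, Finset.sum_add_distrib, ← Finset.sum_mul, ← Finset.sum_mul]
      _ = s * (a * Z ω + Real.sqrt (Z ω) * W ω) + m := by
          rw [← hsa, hWdef]
          have hc : s * (Real.sqrt (Z ω) * (s⁻¹ * ∑ i, x i * Nn ω i))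
              = (s * s⁻¹) * (Real.sqrt (Z ω) * ∑ i, x i * Nn ω i) := by ring
          rw [mul_add, hc, mul_inv_cancel₀ hspos.ne', one_mul]
          ring
  rw [halg, hρ_cash, hρ_hom _ s hspos, hlaw]
  ring
end
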